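/- arXiv:1403.1991 — 2 statements merged into one kernel-verified Lean document; each statement's English description precedes it below -/
import Mathlib

section
/- The noisy voter model has strong spatial mixing for all values of the noise parameter: for every d ≥ 1 and every δ > 0 there exist constants C, c > 0 such that for every finite box G ⊂ ℤ^d, every box H ⊆ G, every site u ∈ ∂G, and every pair of boundary conditions τ, τ^u ∈ {0,1}^{∂G} that differ only at u, the unique stationary distributions μ_G^τ and μ_G^{τ^u} of the noisy voter dynamics on G with boundary conditions τ and τ^u respectively satisfy ‖ μ_G^τ|_H − μ_G^{τ^u}|_H ‖ ≤ C·|V(H)|·exp(−c·dist(u, H)). -/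
open Finset

/-- Total variation distance between two (probability) measures on a finite set:
the maximum over all events `A` of `|μ₁(A) - μ₂(A)|`. -/
noncomputable def tvDist {S : Type*} [Fintype S] (μ ν : S → ℝ) : ℝ :=
  Finset.univ.powerset.sup' (Finset.powerset_nonempty _) fun A =>
    |∑ s ∈ A, μ s - ∑ s ∈ A, ν s|

/-- The ℓ¹ (graph) distance on the lattice `ℤ^d`. -/
def latDist {d : ℕ} (u v : Fin d → ℤ) : ℕ := ∑ i, (u i - v i).natAbs

/-- Two lattice sites are adjacent iff their ℓ¹ distance is `1`. -/
def latAdj {d : ℕ} (u v : Fin d → ℤ) : Prop := latDist u v = 1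

instance {d : ℕ} (u v : Fin d → ℤ) : Decidable (latAdj u v) :=
  inferInstanceAs (Decidable (latDist u v = 1))

/-- The set of lattice neighbours of a site `x ∈ ℤ^d`: the sites `x ± e_i`. -/
def latNbrs {d : ℕ} (x : Fin d → ℤ) : Finset (Fin d → ℤ) :=
  (Finset.univ : Finset (Fin d × Bool)).image
    (fun p => Function.update x p.1 (x p.1 + if p.2 then 1 else -1))

/-- The boundary `∂G` of a box `G ⊂ ℤ^d`: the sites not in `G` that are adjacent to some
site of `G`. -/
def boxBoundary {d : ℕ} (G : Finset (Fin d → ℤ)) : Finset (Fin d → ℤ) :=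
  (G.biUnion latNbrs) \ G

/-- The configuration on `G ∪ ∂G` obtained by combining an interior configuration `η` on `G`
with a boundary condition `τ` on `∂G`. -/
def fullConf {d : ℕ} (G : Finset (Fin d → ℤ)) (τ : {y // y ∈ boxBoundary G} → Bool)
    (η : {x // x ∈ G} → Bool) (y : Fin d → ℤ) : Bool :=
  if h : y ∈ G then η ⟨y, h⟩ else if h' : y ∈ boxBoundary G then τ ⟨y, h'⟩ else false

/-- Flip rate at `x ∈ G` of the noisy voter dynamics on the box `G ⊂ ℤ^d` with boundary
condition `τ`: `(1/(2δ+1))·[(1/(2d))·#{y ~ x : σ(y) ≠ η(x)} + δ]`, where `σ` agrees with `η`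
on `G` and with `τ` on `∂G` (all neighbours of `x` lie in `G ∪ ∂G`). -/
noncomputable def boxRate {d : ℕ} (δ : ℝ) (G : Finset (Fin d → ℤ))
    (τ : {y // y ∈ boxBoundary G} → Bool) (x : {x // x ∈ G}) (η : {x // x ∈ G} → Bool) : ℝ :=
  (1 / (2 * δ + 1)) *
    ((1 / (2 * (d : ℝ))) *
      (((G ∪ boxBoundary G).filter fun y => latAdj (x : Fin d → ℤ) y ∧
          fullConf G τ η y ≠ η x).card : ℝ) + δ)

/-- The rate matrix of the noisy voter dynamics on the box `G` with boundary condition `τ`: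
single-spin flips occur at rate `boxRate`, transitions changing two or more spins have rate
`0`, and diagonal entries make rows sum to `0`. -/
noncomputable def boxQ {d : ℕ} (δ : ℝ) (G : Finset (Fin d → ℤ))
    (τ : {y // y ∈ boxBoundary G} → Bool) :
    Matrix ({x // x ∈ G} → Bool) ({x // x ∈ G} → Bool) ℝ := fun η η' =>
  if η = η' then -∑ x, boxRate δ G τ x η
  else if (Finset.univ.filter fun v => η v ≠ η' v).card = 1 then
    ∑ x ∈ Finset.univ.filter (fun v : {x // x ∈ G} => η v ≠ η' v), boxRate δ G τ x η
  else 0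

/-- The projection (marginal) onto `{0,1}^H` of a measure `μ` on `{0,1}^G`, for `H ⊆ G`. -/
noncomputable def projMeasure {d : ℕ} (G H : Finset (Fin d → ℤ)) (hHG : H ⊆ G)
    (μ : ({x // x ∈ G} → Bool) → ℝ) (ζ : {x // x ∈ H} → Bool) : ℝ :=
  ∑ η ∈ Finset.univ.filter
      (fun η : {x // x ∈ G} → Bool => ∀ v : {x // x ∈ H}, η ⟨v.1, hHG v.2⟩ = ζ v), μ η

/-- The distance from a site `u` to a box `H`: `min_{v ∈ H} dist(u,v)`. -/
noncomputable def distToBox {d : ℕ} (u : Fin d → ℤ) (H : Finset (Fin d → ℤ)) : ℕ :=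
  sInf {k : ℕ | ∃ v ∈ H, k = latDist u v}

section Lattice
variable {d : ℕ}

lemma latDist_comm (u v : Fin d → ℤ) : latDist u v = latDist v u := by
  unfold latDist
  exact Finset.sum_congr rfl fun i _ => by omega

lemma latDist_eq_zero {u v : Fin d → ℤ} : latDist u v = 0 ↔ u = v := by
  unfold latDist
  rw [Finset.sum_eq_zero_iff]
  constructor
  · intro h; funext i
    have := h i (Finset.mem_univ i)
    omega
  · rintro rfl i _; omega

lemma latDist_triangle (u v w : Fin d → ℤ) :
    latDist u w ≤ latDist u v + latDist v w := by
  unfold latDist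
  rw [← Finset.sum_add_distrib]
  refine Finset.sum_le_sum fun i _ => ?_
  have : u i - w i = (u i - v i) + (v i - w i) := by ring
  rw [this]
  exact Int.natAbs_add_le _ _

lemma sum_natAbs_eq_one {f : Fin d → ℕ} (h : ∑ i, f i = 1) :
    ∃ i, f i = 1 ∧ ∀ j, j ≠ i → f j = 0 := by
  have h1 : ∃ i ∈ Finset.univ, f i ≠ 0 := by
    by_contra hc
    push_neg at hc
    simp only [Finset.mem_univ, forall_true_left] at hc
    rw [Finset.sum_eq_zero (fun i _ => hc i)] at h
    omega
  obtain ⟨i, -, hi⟩ := h1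
  have hle : f i ≤ 1 := by
    calc f i ≤ ∑ j, f j := Finset.single_le_sum (fun j _ => Nat.zero_le _) (Finset.mem_univ i)
    _ = 1 := h
  refine ⟨i, by omega, fun j hj => ?_⟩
  have : f i + ∑ k ∈ Finset.univ.erase i, f k = 1 := by
    rw [Finset.add_sum_erase _ _ (Finset.mem_univ i)]; exact h
  have h0 : ∑ k ∈ Finset.univ.erase i, f k = 0 := by omega
  rw [Finset.sum_eq_zero_iff] at h0
  exact h0 j (Finset.mem_erase.mpr ⟨hj, Finset.mem_univ j⟩)

lemma mem_latNbrs_iff_latAdj {x y : Fin d → ℤ} : y ∈ latNbrs x ↔ latAdj x y := by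
  constructor
  · intro hy
    rw [latNbrs, Finset.mem_image] at hy
    obtain ⟨⟨i, b⟩, -, rfl⟩ := hy
    unfold latAdj latDist
    rw [Finset.sum_eq_single i]
    · rcases b with _ | _ <;> simp [Function.update_self] <;> omega
    · intro j _ hj
      rw [Function.update_of_ne hj]; omega
    · intro h; exact absurd (Finset.mem_univ i) h
  · intro hy
    unfold latAdj latDist at hy
    obtain ⟨i, hi1, hi0⟩ := sum_natAbs_eq_one hy
    rw [latNbrs, Finset.mem_image]
    have hyj : ∀ j, j ≠ i → y j = x j := by
      intro j hj; have := hi0 j hj; omega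
    have : y i = x i + 1 ∨ y i = x i + (-1) := by omega
    rcases this with h | h
    · exact ⟨⟨i, true⟩, Finset.mem_univ _, by
        funext j
        by_cases hj : j = i
        · subst hj; simp [Function.update_self, h]
        · rw [Function.update_of_ne hj]; exact (hyj j hj).symm⟩
    · exact ⟨⟨i, false⟩, Finset.mem_univ _, by
        funext j
        by_cases hj : j = i
        · subst hj; simp [Function.update_self, h]
        · rw [Function.update_of_ne hj]; exact (hyj j hj).symm⟩

lemma card_latNbrs (x : Fin d → ℤ) : (latNbrs x).card = 2 * d := by
  rw [latNbrs, Finset.card_image_of_injective _ ?_, Finset.card_univ]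
  · simp [Fintype.card_prod]; ring
  · rintro ⟨i, b⟩ ⟨j, c⟩ h
    by_cases hij : i = j
    · subst hij
      have := congrFun h i
      simp only [Function.update_self] at this
      rcases b with _|_ <;> rcases c with _|_ <;> simp_all <;> omega
    · exfalso
      have h1 := congrFun h i
      simp only [Function.update_apply] at h1
      rw [if_pos trivial, if_neg hij] at h1
      rcases b with _|_ <;> simp at h1 <;> omega

lemma latNbrs_subset {G : Finset (Fin d → ℤ)} {x : Fin d → ℤ} (hx : x ∈ G) :
    latNbrs x ⊆ G ∪ boxBoundary G := by
  intro y hy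
  by_cases hyG : y ∈ G
  · exact Finset.mem_union_left _ hyG
  · refine Finset.mem_union_right _ ?_
    rw [boxBoundary, Finset.mem_sdiff]
    exact ⟨Finset.mem_biUnion.mpr ⟨x, hx, hy⟩, hyG⟩

lemma filter_adj_and {G : Finset (Fin d → ℤ)} {x : Fin d → ℤ} (hx : x ∈ G)
    (P : (Fin d → ℤ) → Prop) [DecidablePred P] :
    (G ∪ boxBoundary G).filter (fun y => latAdj x y ∧ P y) = (latNbrs x).filter P := by
  ext y
  simp only [Finset.mem_filter]
  constructor
  · rintro ⟨-, hadj, hP⟩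
    exact ⟨mem_latNbrs_iff_latAdj.mpr hadj, hP⟩
  · rintro ⟨hmem, hP⟩
    exact ⟨latNbrs_subset hx hmem, mem_latNbrs_iff_latAdj.mp hmem, hP⟩

end Lattice
section Flip
variable {d : ℕ} {G : Finset (Fin d → ℤ)}

abbrev Conf (G : Finset (Fin d → ℤ)) := ({x // x ∈ G} → Bool)

def cflip (η : Conf G) (x : {x // x ∈ G}) : Conf G := Function.update η x (!η x)

lemma diff_cflip (η : Conf G) (x : {x // x ∈ G}) :
    Finset.univ.filter (fun v => η v ≠ cflip η x v) = {x} := by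
  ext v
  simp only [Finset.mem_filter, Finset.mem_univ, true_and, Finset.mem_singleton]; simp only [cflip]
  by_cases hv : v = x
  · subst hv; simp
  · simp [Function.update_of_ne hv, hv]

lemma card_diff_cflip (η : Conf G) (x : {x // x ∈ G}) :
    (Finset.univ.filter (fun v => η v ≠ cflip η x v)).card = 1 := by
  rw [diff_cflip]; simp

lemma cflip_ne (η : Conf G) (x : {x // x ∈ G}) : cflip η x ≠ η := by
  intro h
  have := congrFun h x
  simp [cflip] at this

lemma cflip_inj (η : Conf G) : Function.Injective (cflip η) := by
  intro x y h
  by_contra hxy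
  have := congrFun h x
  simp only [cflip, Function.update_self, Function.update_of_ne hxy] at this
  simp at this

lemma eq_cflip_of_card_one {η η' : Conf G}
    (h : (Finset.univ.filter fun v => η v ≠ η' v).card = 1) :
    ∃ x, η' = cflip η x := by
  obtain ⟨x, hx⟩ := Finset.card_eq_one.mp h
  refine ⟨x, funext fun v => ?_⟩
  by_cases hv : v = x
  · subst hv
    have hvx : v ∈ Finset.univ.filter fun w => η w ≠ η' w := by rw [hx]; exact Finset.mem_singleton_self _
    rw [Finset.mem_filter] at hvx
    have := hvx.2
    simp only [cflip, Function.update_self]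
    revert this
    cases η v <;> cases η' v <;> simp
  · have hvx : v ∉ Finset.univ.filter fun w => η w ≠ η' w := by
      rw [hx]; simp [hv]
    rw [Finset.mem_filter] at hvx
    push_neg at hvx
    have := hvx (Finset.mem_univ v)
    simp only [cflip, Function.update_of_ne hv]
    exact this.symm

/-- The generator identity: integrating `boxQ` against a function. -/
lemma boxQ_integral (δ : ℝ) (τ : {y // y ∈ boxBoundary G} → Bool) (η : Conf G)
    (h : Conf G → ℝ) :
    ∑ η', boxQ δ G τ η η' * h η' =
      ∑ x, boxRate δ G τ x η * (h (cflip η x) - h η) := by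
  classical
  have hsplit : ∑ η', boxQ δ G τ η η' * h η'
      = boxQ δ G τ η η * h η + ∑ η' ∈ Finset.univ.erase η, boxQ δ G τ η η' * h η' :=
    (Finset.add_sum_erase _ _ (Finset.mem_univ η)).symm
  rw [hsplit]
  have hdiag : boxQ δ G τ η η = -∑ x, boxRate δ G τ x η := by simp [boxQ]
  have hoff : ∑ η' ∈ Finset.univ.erase η, boxQ δ G τ η η' * h η'
      = ∑ x, boxRate δ G τ x η * h (cflip η x) := by
    have h1 : ∀ η' ∈ Finset.univ.erase η, boxQ δ G τ η η' * h η' =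
        if (Finset.univ.filter fun v => η v ≠ η' v).card = 1 then
          (∑ x ∈ Finset.univ.filter (fun v : {x // x ∈ G} => η v ≠ η' v),
            boxRate δ G τ x η) * h η' else 0 := by
      intro η' hη'
      rw [Finset.mem_erase] at hη'
      rw [boxQ, if_neg (Ne.symm hη'.1)]
      split <;> simp
    rw [Finset.sum_congr rfl h1, Finset.sum_ite, Finset.sum_const_zero, add_zero]
    have h2 : (Finset.univ.erase η).filter
        (fun η' => (Finset.univ.filter fun v => η v ≠ η' v).card = 1)
        = Finset.image (cflip η) Finset.univ := by
      ext η'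
      simp only [Finset.mem_filter, Finset.mem_erase, Finset.mem_univ, true_and, and_true,
        Finset.mem_image]
      constructor
      · rintro ⟨-, hc⟩
        obtain ⟨x, rfl⟩ := eq_cflip_of_card_one hc
        exact ⟨x, rfl⟩
      · rintro ⟨x, -, rfl⟩
        exact ⟨(cflip_ne η x), card_diff_cflip η x⟩
    rw [h2, Finset.sum_image (fun x _ y _ hxy => cflip_inj η hxy)]
    refine Finset.sum_congr rfl fun x _ => ?_
    rw [diff_cflip, Finset.sum_singleton]
  rw [hoff, hdiag]
  have heq : ∑ x, boxRate δ G τ x η * (h (cflip η x) - h η)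
      = ∑ x, boxRate δ G τ x η * h (cflip η x) - ∑ x, boxRate δ G τ x η * h η := by
    rw [← Finset.sum_sub_distrib]
    exact Finset.sum_congr rfl fun x _ => by ring
  rw [heq, neg_mul, Finset.sum_mul]
  ring

end Flip
section CouplingDefs
variable {d : ℕ} (δ : ℝ) (G : Finset (Fin d → ℤ)) (τ τ' : {y // y ∈ boxBoundary G} → Bool)

noncomputable def mR (s : Conf G × Conf G) (x : {x // x ∈ G}) : ℝ :=
  if s.1 x = s.2 x then min (boxRate δ G τ x s.1) (boxRate δ G τ' x s.2) else 0

noncomputable def aR (s : Conf G × Conf G) (x : {x // x ∈ G}) : ℝ :=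
  boxRate δ G τ x s.1 - mR δ G τ τ' s x

noncomputable def bR (s : Conf G × Conf G) (x : {x // x ∈ G}) : ℝ :=
  boxRate δ G τ' x s.2 - mR δ G τ τ' s x

noncomputable def TT (s : Conf G × Conf G) : ℝ :=
  ∑ x, (mR δ G τ τ' s x + aR δ G τ τ' s x + bR δ G τ τ' s x)

noncomputable def Pbar (M : ℝ) (s s' : Conf G × Conf G) : ℝ :=
  (1/M) * (∑ x, (mR δ G τ τ' s x * (if s' = (cflip s.1 x, cflip s.2 x) then 1 else 0)
    + aR δ G τ τ' s x * (if s' = (cflip s.1 x, s.2) then 1 else 0)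
    + bR δ G τ τ' s x * (if s' = (s.1, cflip s.2 x) then 1 else 0)))
  + (1 - TT δ G τ τ' s / M) * (if s' = s then 1 else 0)

lemma boxRate_nonneg (hδ : 0 < δ) (x : {x // x ∈ G}) (η : Conf G) :
    0 ≤ boxRate δ G τ x η := by
  unfold boxRate
  have h1 : (0:ℝ) < 2 * δ + 1 := by linarith
  have h2 : (0:ℝ) ≤ 1 / (2 * (d:ℝ)) := by positivity
  positivity

lemma boxRate_le (hδ : 0 < δ) (hd : 1 ≤ d) (x : {x // x ∈ G}) (η : Conf G) :
    boxRate δ G τ x η ≤ (1 / (2 * δ + 1)) * (1 + δ) := by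
  unfold boxRate
  have h1 : (0:ℝ) < 2 * δ + 1 := by linarith
  have hcard : (((G ∪ boxBoundary G).filter fun y => latAdj (x : Fin d → ℤ) y ∧
      fullConf G τ η y ≠ η x).card : ℝ) ≤ 2 * d := by
    rw [filter_adj_and x.2]
    calc (((latNbrs (x:Fin d → ℤ)).filter fun y => fullConf G τ η y ≠ η x).card : ℝ)
        ≤ ((latNbrs (x:Fin d → ℤ)).card : ℝ) := by
          exact_mod_cast Finset.card_le_card (Finset.filter_subset _ _)
      _ = 2 * d := by rw [card_latNbrs]; push_cast; ring
  have hd0 : (0:ℝ) < 2 * (d:ℝ) := by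
    have : (1:ℝ) ≤ (d:ℝ) := by exact_mod_cast hd
    linarith
  have hkey : (1 / (2 * (d:ℝ))) * (((G ∪ boxBoundary G).filter fun y =>
      latAdj (x : Fin d → ℤ) y ∧ fullConf G τ η y ≠ η x).card : ℝ) ≤ 1 := by
    rw [div_mul_eq_mul_div, one_mul, div_le_one hd0]
    exact hcard
  have h3 : (0:ℝ) ≤ 1 / (2 * δ + 1) := by positivity
  nlinarith

lemma mR_nonneg (hδ : 0 < δ) (s : Conf G × Conf G) (x : {x // x ∈ G}) :
    0 ≤ mR δ G τ τ' s x := by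
  unfold mR
  split
  · exact le_min (boxRate_nonneg δ G τ hδ x s.1) (boxRate_nonneg δ G τ' hδ x s.2)
  · exact le_refl 0

lemma aR_nonneg (hδ : 0 < δ) (s : Conf G × Conf G) (x : {x // x ∈ G}) :
    0 ≤ aR δ G τ τ' s x := by
  unfold aR mR
  split
  · simp [min_le_left]
  · simp [boxRate_nonneg δ G τ hδ x s.1]

lemma bR_nonneg (hδ : 0 < δ) (s : Conf G × Conf G) (x : {x // x ∈ G}) :
    0 ≤ bR δ G τ τ' s x := by
  unfold bR mR
  split
  · simp [min_le_right]
  · simp [boxRate_nonneg δ G τ' hδ x s.2]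

lemma TT_le (hδ : 0 < δ) (hd : 1 ≤ d) (s : Conf G × Conf G) :
    TT δ G τ τ' s ≤ 2 * (G.card : ℝ) * ((1 / (2 * δ + 1)) * (1 + δ)) := by
  unfold TT
  have hstep : ∀ x : {x // x ∈ G},
      mR δ G τ τ' s x + aR δ G τ τ' s x + bR δ G τ τ' s x
        ≤ 2 * ((1 / (2 * δ + 1)) * (1 + δ)) := by
    intro x
    have h1 := boxRate_le δ G τ hδ hd x s.1
    have h2 := boxRate_le δ G τ' hδ hd x s.2
    have h3 := mR_nonneg δ G τ τ' hδ s x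
    unfold aR bR
    linarith
  calc ∑ x, (mR δ G τ τ' s x + aR δ G τ τ' s x + bR δ G τ τ' s x)
      ≤ ∑ _x : {x // x ∈ G}, 2 * ((1 / (2 * δ + 1)) * (1 + δ)) :=
        Finset.sum_le_sum fun x _ => hstep x
    _ = (G.card : ℝ) * (2 * ((1 / (2 * δ + 1)) * (1 + δ))) := by
        rw [Finset.sum_const, Finset.card_univ, Fintype.card_coe, nsmul_eq_mul]
    _ = 2 * (G.card : ℝ) * ((1 / (2 * δ + 1)) * (1 + δ)) := by ring

lemma Pbar_nonneg (hδ : 0 < δ) {M : ℝ} (hM : 0 < M)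
    (hT : ∀ s, TT δ G τ τ' s ≤ M) (s s' : Conf G × Conf G) :
    0 ≤ Pbar δ G τ τ' M s s' := by
  unfold Pbar
  have h1 : (0:ℝ) ≤ 1/M := by positivity
  have h2 : 0 ≤ 1 - TT δ G τ τ' s / M := by
    rw [sub_nonneg, div_le_one hM]; exact hT s
  have h3 : ∀ x : {x // x ∈ G},
      0 ≤ mR δ G τ τ' s x * (if s' = (cflip s.1 x, cflip s.2 x) then (1:ℝ) else 0)
        + aR δ G τ τ' s x * (if s' = (cflip s.1 x, s.2) then 1 else 0)
        + bR δ G τ τ' s x * (if s' = (s.1, cflip s.2 x) then 1 else 0) := by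
    intro x
    refine add_nonneg (add_nonneg (mul_nonneg (mR_nonneg δ G τ τ' hδ s x) ?_)
      (mul_nonneg (aR_nonneg δ G τ τ' hδ s x) ?_))
      (mul_nonneg (bR_nonneg δ G τ τ' hδ s x) ?_) <;> split <;> norm_num
  refine add_nonneg (mul_nonneg h1 (Finset.sum_nonneg fun x _ => h3 x))
    (mul_nonneg h2 ?_)
  split <;> norm_num

lemma Pbar_integral (M : ℝ) (s : Conf G × Conf G) (g : Conf G × Conf G → ℝ) :
    ∑ s', Pbar δ G τ τ' M s s' * g s' =
      g s + (1/M) * ∑ x,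
        (mR δ G τ τ' s x * (g (cflip s.1 x, cflip s.2 x) - g s)
        + aR δ G τ τ' s x * (g (cflip s.1 x, s.2) - g s)
        + bR δ G τ τ' s x * (g (s.1, cflip s.2 x) - g s)) := by
  classical
  have key : ∀ (t : Conf G × Conf G) (r : ℝ),
      (∑ s', r * (if s' = t then (1:ℝ) else 0) * g s') = r * g t := by
    intro t r
    rw [Finset.sum_eq_single t]
    · simp
    · intro s' _ hs'; simp [hs']
    · intro habs; exact absurd (Finset.mem_univ t) habs
  have step1 : ∑ s', Pbar δ G τ τ' M s s' * g s'
      = (1/M) * (∑ x, (mR δ G τ τ' s x * g (cflip s.1 x, cflip s.2 x)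
          + aR δ G τ τ' s x * g (cflip s.1 x, s.2)
          + bR δ G τ τ' s x * g (s.1, cflip s.2 x)))
        + (1 - TT δ G τ τ' s / M) * g s := by
    unfold Pbar
    simp only [add_mul]
    rw [Finset.sum_add_distrib]
    congr 1
    · simp only [mul_assoc]
      rw [← Finset.mul_sum]
      congr 1
      simp only [Finset.sum_mul]
      rw [Finset.sum_comm]
      refine Finset.sum_congr rfl fun x _ => ?_
      simp only [add_mul]
      rw [Finset.sum_add_distrib, Finset.sum_add_distrib]
      rw [key, key, key]
    · exact key s _
  rw [step1]
  have e2 : ∑ x, (mR δ G τ τ' s x * (g (cflip s.1 x, cflip s.2 x) - g s)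
        + aR δ G τ τ' s x * (g (cflip s.1 x, s.2) - g s)
        + bR δ G τ τ' s x * (g (s.1, cflip s.2 x) - g s))
      = (∑ x, (mR δ G τ τ' s x * g (cflip s.1 x, cflip s.2 x)
          + aR δ G τ τ' s x * g (cflip s.1 x, s.2)
          + bR δ G τ τ' s x * g (s.1, cflip s.2 x))) - TT δ G τ τ' s * g s := by
    rw [TT, Finset.sum_mul, ← Finset.sum_sub_distrib]
    exact Finset.sum_congr rfl fun x _ => by ring
  rw [e2]
  ring

lemma Pbar_rowsum (M : ℝ) (s : Conf G × Conf G) :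
    ∑ s', Pbar δ G τ τ' M s s' = 1 := by
  have h := Pbar_integral δ G τ τ' M s (fun _ => (1:ℝ))
  simpa using h

end CouplingDefs
section RateBounds
variable {d : ℕ} (δ : ℝ) (G : Finset (Fin d → ℤ)) (τ τ' : {y // y ∈ boxBoundary G} → Bool)

noncomputable def fneq (x : {x // x ∈ G}) (s : Conf G × Conf G) : ℝ :=
  if s.1 x = s.2 x then 0 else 1

def Dx (s : Conf G × Conf G) (x : {x // x ∈ G}) : ℕ :=
  ((latNbrs (x : Fin d → ℤ)).filter
    (fun y => fullConf G τ s.1 y ≠ fullConf G τ' s.2 y)).card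

lemma card_filter_le_add {β : Type*} {A : Finset β} {p q r : β → Prop}
    [DecidableEq β] [DecidablePred p] [DecidablePred q] [DecidablePred r]
    (h : ∀ y ∈ A, p y → q y ∨ r y) :
    (A.filter p).card ≤ (A.filter q).card + (A.filter r).card := by
  calc (A.filter p).card ≤ ((A.filter q) ∪ (A.filter r)).card := by
        apply Finset.card_le_card
        intro y hy
        rw [Finset.mem_filter] at hy
        rcases h y hy.1 hy.2 with hq | hr
        · exact Finset.mem_union_left _ (Finset.mem_filter.mpr ⟨hy.1, hq⟩)
        · exact Finset.mem_union_right _ (Finset.mem_filter.mpr ⟨hy.1, hr⟩)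
    _ ≤ _ := Finset.card_union_le _ _

lemma boxRate_eq (η : Conf G) (x : {x // x ∈ G}) :
    boxRate δ G τ x η = (1 / (2 * δ + 1)) * ((1 / (2 * (d:ℝ))) *
      (((latNbrs (x : Fin d → ℤ)).filter fun y => fullConf G τ η y ≠ η x).card : ℝ) + δ) := by
  rw [boxRate, filter_adj_and x.2]

lemma rate_diff_le (hδ : 0 < δ) (s : Conf G × Conf G) (x : {x // x ∈ G})
    (h : s.1 x = s.2 x) :
    |boxRate δ G τ x s.1 - boxRate δ G τ' x s.2| ≤
      (1 / (2 * δ + 1)) * ((1 / (2 * (d:ℝ))) * (Dx G τ τ' s x : ℝ)) := by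
  rw [boxRate_eq, boxRate_eq]
  set c1 := ((latNbrs (x : Fin d → ℤ)).filter fun y => fullConf G τ s.1 y ≠ s.1 x).card
  set c2 := ((latNbrs (x : Fin d → ℤ)).filter fun y => fullConf G τ' s.2 y ≠ s.2 x).card
  have h12 : c1 ≤ c2 + Dx G τ τ' s x := by
    apply card_filter_le_add
    intro y _ hy
    by_cases he : fullConf G τ s.1 y = fullConf G τ' s.2 y
    · left; rw [← he, ← h]; exact hy
    · right; exact he
  have h21 : c2 ≤ c1 + Dx G τ τ' s x := by
    apply card_filter_le_add
    intro y _ hy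
    by_cases he : fullConf G τ s.1 y = fullConf G τ' s.2 y
    · left; rw [he, h]; exact hy
    · right; exact he
  have habs : |(c1 : ℝ) - (c2 : ℝ)| ≤ (Dx G τ τ' s x : ℝ) := by
    rw [abs_sub_le_iff]
    constructor
    · have : (c1:ℝ) ≤ (c2:ℝ) + (Dx G τ τ' s x : ℝ) := by exact_mod_cast h12
      linarith
    · have : (c2:ℝ) ≤ (c1:ℝ) + (Dx G τ τ' s x : ℝ) := by exact_mod_cast h21
      linarith
  have hα : (0:ℝ) ≤ 1 / (2 * δ + 1) := by positivity
  have hdd : (0:ℝ) ≤ 1 / (2 * (d:ℝ)) := by positivity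
  have key : (1 / (2 * δ + 1)) * ((1 / (2 * (d:ℝ))) * (c1:ℝ) + δ)
      - (1 / (2 * δ + 1)) * ((1 / (2 * (d:ℝ))) * (c2:ℝ) + δ)
      = (1 / (2 * δ + 1)) * ((1 / (2 * (d:ℝ))) * ((c1:ℝ) - (c2:ℝ))) := by ring
  rw [key, abs_mul, abs_mul, abs_of_nonneg hα, abs_of_nonneg hdd]
  have := mul_le_mul_of_nonneg_left habs hdd
  exact mul_le_mul_of_nonneg_left this hα

lemma rate_sum_ge (hδ : 0 < δ) (hd : 1 ≤ d) (s : Conf G × Conf G) (x : {x // x ∈ G})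
    (h : s.1 x ≠ s.2 x) :
    1 - (1 / (2 * δ + 1)) * ((1 / (2 * (d:ℝ))) * (Dx G τ τ' s x : ℝ)) ≤
      boxRate δ G τ x s.1 + boxRate δ G τ' x s.2 := by
  rw [boxRate_eq, boxRate_eq]
  set c1 := ((latNbrs (x : Fin d → ℤ)).filter fun y => fullConf G τ s.1 y ≠ s.1 x).card
  set c2 := ((latNbrs (x : Fin d → ℤ)).filter fun y => fullConf G τ' s.2 y ≠ s.2 x).card
  have hsplit : ((latNbrs (x : Fin d → ℤ)).filter
        (fun y => fullConf G τ s.1 y ≠ fullConf G τ' s.2 y)).card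
      + ((latNbrs (x : Fin d → ℤ)).filter
        (fun y => ¬ (fullConf G τ s.1 y ≠ fullConf G τ' s.2 y))).card
      = 2 * d := by
    rw [Finset.card_filter_add_card_filter_not, card_latNbrs]
  have heqle : ((latNbrs (x : Fin d → ℤ)).filter
        (fun y => ¬ (fullConf G τ s.1 y ≠ fullConf G τ' s.2 y))).card ≤ c1 + c2 := by
    apply card_filter_le_add
    intro y _ hy
    rw [not_not] at hy
    by_cases h1 : fullConf G τ s.1 y = s.1 x
    · right; exact fun hc => h (by rw [← h1, hy, hc])
    · left; exact h1
  have hnat : 2 * d ≤ c1 + c2 + Dx G τ τ' s x := by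
    have : Dx G τ τ' s x = ((latNbrs (x : Fin d → ℤ)).filter
        (fun y => fullConf G τ s.1 y ≠ fullConf G τ' s.2 y)).card := rfl
    omega
  have hreal : 2 * (d:ℝ) ≤ (c1:ℝ) + (c2:ℝ) + (Dx G τ τ' s x : ℝ) := by exact_mod_cast hnat
  have hd0 : (0:ℝ) < 2 * (d:ℝ) := by
    have : (1:ℝ) ≤ (d:ℝ) := by exact_mod_cast hd
    linarith
  have hα : (0:ℝ) < 2 * δ + 1 := by linarith
  have e1 : (1 / (2 * δ + 1)) * ((1 / (2 * (d:ℝ))) * (c1:ℝ) + δ)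
      + (1 / (2 * δ + 1)) * ((1 / (2 * (d:ℝ))) * (c2:ℝ) + δ)
      = (1 / (2 * δ + 1)) * ((1 / (2 * (d:ℝ))) * ((c1:ℝ) + (c2:ℝ)) + 2 * δ) := by ring
  rw [e1]
  have e2 : (1:ℝ) = (1 / (2 * δ + 1)) * (2 * δ + 1) := by field_simp
  have hc12 : 2 * (d:ℝ) - (Dx G τ τ' s x : ℝ) ≤ (c1:ℝ) + (c2:ℝ) := by linarith
  have hmono : (1 / (2 * (d:ℝ))) * (2 * (d:ℝ) - (Dx G τ τ' s x : ℝ))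
      ≤ (1 / (2 * (d:ℝ))) * ((c1:ℝ) + (c2:ℝ)) := by
    apply mul_le_mul_of_nonneg_left hc12
    positivity
  have e3 : (1 / (2 * (d:ℝ))) * (2 * (d:ℝ)) = 1 := by field_simp
  have : (1 / (2 * (d:ℝ))) * (2 * (d:ℝ) - (Dx G τ τ' s x : ℝ))
      = 1 - (1 / (2 * (d:ℝ))) * (Dx G τ τ' s x : ℝ) := by
    rw [mul_sub, e3]
  rw [this] at hmono
  have hfin := mul_le_mul_of_nonneg_left (by linarith [hmono] :
    (1 - (1 / (2 * (d:ℝ))) * (Dx G τ τ' s x : ℝ)) + 2*δ ≤ (1 / (2 * (d:ℝ))) * ((c1:ℝ) + (c2:ℝ)) + 2*δ)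
    (by positivity : (0:ℝ) ≤ 1 / (2 * δ + 1))
  calc 1 - (1 / (2 * δ + 1)) * ((1 / (2 * (d:ℝ))) * (Dx G τ τ' s x : ℝ))
      = (1 / (2 * δ + 1)) * ((1 - (1 / (2 * (d:ℝ))) * (Dx G τ τ' s x : ℝ)) + 2*δ) := by
        field_simp
        ring
    _ ≤ (1 / (2 * δ + 1)) * ((1 / (2 * (d:ℝ))) * ((c1:ℝ) + (c2:ℝ)) + 2 * δ) := hfin
  
end RateBounds
section Fneq
variable {d : ℕ} (δ : ℝ) (G : Finset (Fin d → ℤ)) (τ τ' : {y // y ∈ boxBoundary G} → Bool)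

lemma fneq_nonneg (x : {x // x ∈ G}) (s : Conf G × Conf G) : 0 ≤ fneq G x s := by
  unfold fneq; split <;> norm_num

lemma fneq_le_one (x : {x // x ∈ G}) (s : Conf G × Conf G) : fneq G x s ≤ 1 := by
  unfold fneq; split <;> norm_num

lemma fneq_flip_both (s : Conf G × Conf G) (x z : {x // x ∈ G}) :
    fneq G x (cflip s.1 z, cflip s.2 z) = fneq G x s := by
  unfold fneq cflip
  by_cases h : x = z
  · subst h; simp only [Function.update_self]
    cases s.1 x <;> cases s.2 x <;> simp
  · simp only [Function.update_of_ne h]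

lemma fneq_flip_one_eq (s : Conf G × Conf G) (x : {x // x ∈ G}) :
    fneq G x (cflip s.1 x, s.2) = 1 - fneq G x s := by
  unfold fneq cflip
  simp only [Function.update_self]
  cases s.1 x <;> cases s.2 x <;> simp

lemma fneq_flip_two_eq (s : Conf G × Conf G) (x : {x // x ∈ G}) :
    fneq G x (s.1, cflip s.2 x) = 1 - fneq G x s := by
  unfold fneq cflip
  simp only [Function.update_self]
  cases s.1 x <;> cases s.2 x <;> simp

lemma fneq_flip_one_ne (s : Conf G × Conf G) {x z : {x // x ∈ G}} (h : x ≠ z) :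
    fneq G x (cflip s.1 z, s.2) = fneq G x s := by
  unfold fneq cflip
  simp only [Function.update_of_ne h]

lemma fneq_flip_two_ne (s : Conf G × Conf G) {x z : {x // x ∈ G}} (h : x ≠ z) :
    fneq G x (s.1, cflip s.2 z) = fneq G x s := by
  unfold fneq cflip
  simp only [Function.update_of_ne h]

lemma Pbar_integral_fneq (M : ℝ) (s : Conf G × Conf G) (x : {x // x ∈ G}) :
    ∑ s', Pbar δ G τ τ' M s s' * fneq G x s' =
      fneq G x s + (1/M) * ((aR δ G τ τ' s x + bR δ G τ τ' s x) * (1 - 2 * fneq G x s)) := by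
  rw [Pbar_integral]
  congr 1
  have hsum : ∑ z, (mR δ G τ τ' s z * (fneq G x (cflip s.1 z, cflip s.2 z) - fneq G x s)
        + aR δ G τ τ' s z * (fneq G x (cflip s.1 z, s.2) - fneq G x s)
        + bR δ G τ τ' s z * (fneq G x (s.1, cflip s.2 z) - fneq G x s))
      = (aR δ G τ τ' s x + bR δ G τ τ' s x) * (1 - 2 * fneq G x s) := by
    rw [Finset.sum_eq_single x]
    · rw [fneq_flip_both, fneq_flip_one_eq, fneq_flip_two_eq]
      ring
    · intro z _ hzx
      rw [fneq_flip_both, fneq_flip_one_ne G s (Ne.symm hzx), fneq_flip_two_ne G s (Ne.symm hzx)]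
      ring
    · intro habs; exact absurd (Finset.mem_univ x) habs
  rw [hsum]

lemma min_add_eq_abs (a b : ℝ) : a + b - 2 * min a b = |a - b| := by
  rcases le_total a b with h | h
  · rw [min_eq_left h, abs_sub_comm, abs_of_nonneg (by linarith)]
    ring
  · rw [min_eq_right h, abs_of_nonneg (by linarith)]
    ring

lemma ab_bound (hδ : 0 < δ) (hd : 1 ≤ d) (s : Conf G × Conf G) (x : {x // x ∈ G}) :
    (aR δ G τ τ' s x + bR δ G τ τ' s x) * (1 - 2 * fneq G x s)
      ≤ (1/(2*δ+1)) * ((1/(2*(d:ℝ))) * (Dx G τ τ' s x : ℝ)) - fneq G x s := by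
  by_cases h : s.1 x = s.2 x
  · have hf : fneq G x s = 0 := if_pos h
    have hab : aR δ G τ τ' s x + bR δ G τ τ' s x
        = |boxRate δ G τ x s.1 - boxRate δ G τ' x s.2| := by
      unfold aR bR mR
      rw [if_pos h, ← min_add_eq_abs]
      ring
    rw [hf, hab]
    have := rate_diff_le δ G τ τ' hδ s x h
    linarith
  · have hf : fneq G x s = 1 := if_neg h
    have hab : aR δ G τ τ' s x + bR δ G τ τ' s x
        = boxRate δ G τ x s.1 + boxRate δ G τ' x s.2 := by
      unfold aR bR mR
      rw [if_neg h]
      ring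
    rw [hf, hab]
    have := rate_sum_ge δ G τ τ' hδ hd s x h
    linarith

end Fneq
section Evolution
variable {d : ℕ} (δ : ℝ) (G : Finset (Fin d → ℤ)) (τ τ' : {y // y ∈ boxBoundary G} → Bool)
  (M : ℝ) (μ₁ μ₂ : Conf G → ℝ)

noncomputable def nuSeq : ℕ → (Conf G × Conf G → ℝ)
  | 0 => fun s => μ₁ s.1 * μ₂ s.2
  | (k+1) => fun s' => ∑ s, nuSeq k s * Pbar δ G τ τ' M s s'

lemma nuSeq_nonneg (hδ : 0 < δ) (hM : 0 < M) (hT : ∀ s, TT δ G τ τ' s ≤ M)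
    (h1 : ∀ η, 0 ≤ μ₁ η) (h2 : ∀ η, 0 ≤ μ₂ η) :
    ∀ k s, 0 ≤ nuSeq δ G τ τ' M μ₁ μ₂ k s := by
  intro k
  induction k with
  | zero => intro s; exact mul_nonneg (h1 s.1) (h2 s.2)
  | succ k ih =>
    intro s'
    exact Finset.sum_nonneg fun s _ =>
      mul_nonneg (ih s) (Pbar_nonneg δ G τ τ' hδ hM hT s s')

lemma nuSeq_integral (k : ℕ) (g : Conf G × Conf G → ℝ) :
    ∑ s', nuSeq δ G τ τ' M μ₁ μ₂ (k+1) s' * g s'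
      = ∑ s, nuSeq δ G τ τ' M μ₁ μ₂ k s * (∑ s', Pbar δ G τ τ' M s s' * g s') := by
  show ∑ s', (∑ s, nuSeq δ G τ τ' M μ₁ μ₂ k s * Pbar δ G τ τ' M s s') * g s' = _
  simp only [Finset.sum_mul, Finset.mul_sum]
  rw [Finset.sum_comm]
  exact Finset.sum_congr rfl fun s _ => Finset.sum_congr rfl fun s' _ => by ring

lemma nuSeq_total (hμ1 : ∑ η, μ₁ η = 1) (hμ2 : ∑ η, μ₂ η = 1) :
    ∀ k, ∑ s, nuSeq δ G τ τ' M μ₁ μ₂ k s = 1 := by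
  intro k
  induction k with
  | zero =>
    show ∑ s : Conf G × Conf G, μ₁ s.1 * μ₂ s.2 = 1
    rw [Fintype.sum_prod_type]
    calc ∑ η, ∑ ξ, μ₁ η * μ₂ ξ = ∑ η, μ₁ η * ∑ ξ, μ₂ ξ := by
          exact Finset.sum_congr rfl fun η _ => (Finset.mul_sum _ _ _).symm
      _ = 1 := by rw [hμ2]; simp [hμ1]
  | succ k ih =>
    have h := nuSeq_integral δ G τ τ' M μ₁ μ₂ k (fun _ => (1:ℝ))
    simp only [mul_one] at h
    rw [h]
    calc ∑ s, nuSeq δ G τ τ' M μ₁ μ₂ k s * (∑ s', Pbar δ G τ τ' M s s')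
        = ∑ s, nuSeq δ G τ τ' M μ₁ μ₂ k s := by
          refine Finset.sum_congr rfl fun s _ => ?_
          rw [Pbar_rowsum δ G τ τ' M s, mul_one]
      _ = 1 := ih

lemma sum_boxQ_integral (μ : Conf G → ℝ) (τ₀ : {y // y ∈ boxBoundary G} → Bool)
    (hQ : Matrix.vecMul μ (boxQ δ G τ₀) = 0) (h : Conf G → ℝ) :
    ∑ η, μ η * (∑ x, boxRate δ G τ₀ x η * (h (cflip η x) - h η)) = 0 := by
  have e1 : ∀ η, ∑ x, boxRate δ G τ₀ x η * (h (cflip η x) - h η)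
      = ∑ η', boxQ δ G τ₀ η η' * h η' := fun η => (boxQ_integral δ τ₀ η h).symm
  calc ∑ η, μ η * (∑ x, boxRate δ G τ₀ x η * (h (cflip η x) - h η))
      = ∑ η, μ η * (∑ η', boxQ δ G τ₀ η η' * h η') := by
        exact Finset.sum_congr rfl fun η _ => by rw [e1]
    _ = ∑ η', (∑ η, μ η * boxQ δ G τ₀ η η') * h η' := by
        simp only [Finset.mul_sum, Finset.sum_mul]
        rw [Finset.sum_comm]
        exact Finset.sum_congr rfl fun η _ => Finset.sum_congr rfl fun η' _ => by ring
    _ = 0 := by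
        refine Finset.sum_eq_zero fun η' _ => ?_
        have := congrFun hQ η'
        simp only [Matrix.vecMul, dotProduct, Pi.zero_apply] at this
        rw [this, zero_mul]

lemma nuSeq_fst (hμ2 : ∑ η, μ₂ η = 1) (hQ : Matrix.vecMul μ₁ (boxQ δ G τ) = 0) :
    ∀ k (h : Conf G → ℝ),
      ∑ s, nuSeq δ G τ τ' M μ₁ μ₂ k s * h s.1 = ∑ η, μ₁ η * h η := by
  intro k
  induction k with
  | zero =>
    intro h
    show ∑ s : Conf G × Conf G, (μ₁ s.1 * μ₂ s.2) * h s.1 = _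
    rw [Fintype.sum_prod_type]
    refine Finset.sum_congr rfl fun η _ => ?_
    calc ∑ ξ, (μ₁ η * μ₂ ξ) * h η = (∑ ξ, μ₂ ξ) * (μ₁ η * h η) := by
          rw [Finset.sum_mul]
          exact Finset.sum_congr rfl fun ξ _ => by ring
      _ = μ₁ η * h η := by rw [hμ2, one_mul]
  | succ k ih =>
    intro h
    have hint := nuSeq_integral δ G τ τ' M μ₁ μ₂ k (fun s => h s.1)
    rw [hint]
    have hinner : ∀ s : Conf G × Conf G,
        (∑ s', Pbar δ G τ τ' M s s' * h s'.1)
          = h s.1 + (1/M) * ∑ x, boxRate δ G τ x s.1 * (h (cflip s.1 x) - h s.1) := by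
      intro s
      rw [Pbar_integral δ G τ τ' M s (fun t => h t.1)]
      congr 1
      congr 1
      refine Finset.sum_congr rfl fun x _ => ?_
      show mR δ G τ τ' s x * (h (cflip s.1 x) - h s.1)
        + aR δ G τ τ' s x * (h (cflip s.1 x) - h s.1)
        + bR δ G τ τ' s x * (h s.1 - h s.1) = _
      unfold aR
      ring
    calc ∑ s, nuSeq δ G τ τ' M μ₁ μ₂ k s * (∑ s', Pbar δ G τ τ' M s s' * h s'.1)
        = ∑ s, nuSeq δ G τ τ' M μ₁ μ₂ k s *
            ((fun η => h η + (1/M) * ∑ x, boxRate δ G τ x η * (h (cflip η x) - h η)) s.1) := by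
          exact Finset.sum_congr rfl fun s _ => by rw [hinner s]
      _ = ∑ η, μ₁ η * (h η + (1/M) * ∑ x, boxRate δ G τ x η * (h (cflip η x) - h η)) := by
          exact ih (fun η => h η + (1/M) * ∑ x, boxRate δ G τ x η * (h (cflip η x) - h η))
      _ = ∑ η, μ₁ η * h η
          + (1/M) * ∑ η, μ₁ η * (∑ x, boxRate δ G τ x η * (h (cflip η x) - h η)) := by
          rw [Finset.mul_sum, ← Finset.sum_add_distrib]
          exact Finset.sum_congr rfl fun η _ => by ring
      _ = ∑ η, μ₁ η * h η := by
          rw [sum_boxQ_integral δ G μ₁ τ hQ h, mul_zero, add_zero]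

lemma nuSeq_snd (hμ1 : ∑ η, μ₁ η = 1) (hQ : Matrix.vecMul μ₂ (boxQ δ G τ') = 0) :
    ∀ k (h : Conf G → ℝ),
      ∑ s, nuSeq δ G τ τ' M μ₁ μ₂ k s * h s.2 = ∑ η, μ₂ η * h η := by
  intro k
  induction k with
  | zero =>
    intro h
    show ∑ s : Conf G × Conf G, (μ₁ s.1 * μ₂ s.2) * h s.2 = _
    rw [Fintype.sum_prod_type]
    calc ∑ η, ∑ ξ, (μ₁ η * μ₂ ξ) * h ξ = ∑ η, μ₁ η * (∑ ξ, μ₂ ξ * h ξ) := by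
          refine Finset.sum_congr rfl fun η _ => ?_
          rw [Finset.mul_sum]
          exact Finset.sum_congr rfl fun ξ _ => by ring
      _ = (∑ η, μ₁ η) * (∑ ξ, μ₂ ξ * h ξ) := by rw [← Finset.sum_mul]
      _ = ∑ ξ, μ₂ ξ * h ξ := by rw [hμ1, one_mul]
  | succ k ih =>
    intro h
    have hint := nuSeq_integral δ G τ τ' M μ₁ μ₂ k (fun s => h s.2)
    rw [hint]
    have hinner : ∀ s : Conf G × Conf G,
        (∑ s', Pbar δ G τ τ' M s s' * h s'.2)
          = h s.2 + (1/M) * ∑ x, boxRate δ G τ' x s.2 * (h (cflip s.2 x) - h s.2) := by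
      intro s
      rw [Pbar_integral δ G τ τ' M s (fun t => h t.2)]
      congr 1
      congr 1
      refine Finset.sum_congr rfl fun x _ => ?_
      show mR δ G τ τ' s x * (h (cflip s.2 x) - h s.2)
        + aR δ G τ τ' s x * (h s.2 - h s.2)
        + bR δ G τ τ' s x * (h (cflip s.2 x) - h s.2) = _
      unfold bR
      ring
    calc ∑ s, nuSeq δ G τ τ' M μ₁ μ₂ k s * (∑ s', Pbar δ G τ τ' M s s' * h s'.2)
        = ∑ s, nuSeq δ G τ τ' M μ₁ μ₂ k s *
            ((fun ξ => h ξ + (1/M) * ∑ x, boxRate δ G τ' x ξ * (h (cflip ξ x) - h ξ)) s.2) := by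
          exact Finset.sum_congr rfl fun s _ => by rw [hinner s]
      _ = ∑ ξ, μ₂ ξ * (h ξ + (1/M) * ∑ x, boxRate δ G τ' x ξ * (h (cflip ξ x) - h ξ)) := by
          exact ih (fun ξ => h ξ + (1/M) * ∑ x, boxRate δ G τ' x ξ * (h (cflip ξ x) - h ξ))
      _ = ∑ ξ, μ₂ ξ * h ξ
          + (1/M) * ∑ ξ, μ₂ ξ * (∑ x, boxRate δ G τ' x ξ * (h (cflip ξ x) - h ξ)) := by
          rw [Finset.mul_sum, ← Finset.sum_add_distrib]
          exact Finset.sum_congr rfl fun ξ _ => by ring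
      _ = ∑ ξ, μ₂ ξ * h ξ := by
          rw [sum_boxQ_integral δ G μ₂ τ' hQ h, mul_zero, add_zero]

end Evolution
section Rho
variable {d : ℕ} (δ : ℝ) (G : Finset (Fin d → ℤ)) (τ τ' : {y // y ∈ boxBoundary G} → Bool)
  (M : ℝ) (μ₁ μ₂ : Conf G → ℝ) (u : Fin d → ℤ)

noncomputable def rho (k : ℕ) (x : {x // x ∈ G}) : ℝ :=
  ∑ s, nuSeq δ G τ τ' M μ₁ μ₂ k s * fneq G x s

noncomputable def rhohat (k : ℕ) (y : Fin d → ℤ) : ℝ :=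
  if h : y ∈ G then rho δ G τ τ' M μ₁ μ₂ k ⟨y, h⟩ else if y = u then 1 else 0

variable (hδ : 0 < δ) (hd : 1 ≤ d) (hM : 0 < M) (hT : ∀ s, TT δ G τ τ' s ≤ M)
  (h1 : ∀ η, 0 ≤ μ₁ η) (h2 : ∀ η, 0 ≤ μ₂ η)
  (hμ1 : ∑ η, μ₁ η = 1) (hμ2 : ∑ η, μ₂ η = 1)

include hδ hM hT h1 h2 in
lemma rho_nonneg (k : ℕ) (x : {x // x ∈ G}) : 0 ≤ rho δ G τ τ' M μ₁ μ₂ k x :=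
  Finset.sum_nonneg fun s _ =>
    mul_nonneg (nuSeq_nonneg δ G τ τ' M μ₁ μ₂ hδ hM hT h1 h2 k s) (fneq_nonneg G x s)

include hδ hM hT h1 h2 hμ1 hμ2 in
lemma rho_le_one (k : ℕ) (x : {x // x ∈ G}) : rho δ G τ τ' M μ₁ μ₂ k x ≤ 1 := by
  calc rho δ G τ τ' M μ₁ μ₂ k x
      ≤ ∑ s, nuSeq δ G τ τ' M μ₁ μ₂ k s := by
        refine Finset.sum_le_sum fun s _ => ?_
        have hn := nuSeq_nonneg δ G τ τ' M μ₁ μ₂ hδ hM hT h1 h2 k s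
        have hf := fneq_le_one G x s
        nlinarith
    _ = 1 := nuSeq_total δ G τ τ' M μ₁ μ₂ hμ1 hμ2 k

include hδ hM hT h1 h2 hμ1 hμ2 in
lemma rhohat_nonneg (k : ℕ) (y : Fin d → ℤ) : 0 ≤ rhohat δ G τ τ' M μ₁ μ₂ u k y := by
  unfold rhohat
  split
  · exact rho_nonneg δ G τ τ' M μ₁ μ₂ hδ hM hT h1 h2 k _
  · split <;> norm_num

include hδ hM hT h1 h2 hμ1 hμ2 in
lemma rhohat_le_one (k : ℕ) (y : Fin d → ℤ) : rhohat δ G τ τ' M μ₁ μ₂ u k y ≤ 1 := by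
  unfold rhohat
  split
  · exact rho_le_one δ G τ τ' M μ₁ μ₂ hδ hM hT h1 h2 hμ1 hμ2 k _
  · split <;> norm_num

lemma rho_rec (k : ℕ) (x : {x // x ∈ G}) :
    rho δ G τ τ' M μ₁ μ₂ (k+1) x = rho δ G τ τ' M μ₁ μ₂ k x
      + (1/M) * ∑ s, nuSeq δ G τ τ' M μ₁ μ₂ k s *
          ((aR δ G τ τ' s x + bR δ G τ τ' s x) * (1 - 2 * fneq G x s)) := by
  unfold rho
  rw [nuSeq_integral δ G τ τ' M μ₁ μ₂ k (fneq G x)]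
  rw [Finset.mul_sum, ← Finset.sum_add_distrib]
  refine Finset.sum_congr rfl fun s _ => ?_
  rw [Pbar_integral_fneq δ G τ τ' M s x]
  ring

include hδ hd hM hT h1 h2 hμ1 hμ2 in
lemma Dsum_le (hagree : ∀ w : {y // y ∈ boxBoundary G}, (w : Fin d → ℤ) ≠ u → τ w = τ' w)
    (k : ℕ) (x : {x // x ∈ G}) :
    ∑ s, nuSeq δ G τ τ' M μ₁ μ₂ k s * (Dx G τ τ' s x : ℝ)
      ≤ ∑ y ∈ latNbrs (x : Fin d → ℤ), rhohat δ G τ τ' M μ₁ μ₂ u k y := by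
  have hexp : ∀ s : Conf G × Conf G, (Dx G τ τ' s x : ℝ) =
      ∑ y ∈ latNbrs (x : Fin d → ℤ),
        (if fullConf G τ s.1 y = fullConf G τ' s.2 y then (0:ℝ) else 1) := by
    intro s
    rw [Dx, Finset.card_filter]
    push_cast
    refine Finset.sum_congr rfl fun y _ => ?_
    by_cases h : fullConf G τ s.1 y = fullConf G τ' s.2 y <;> simp [h]
  calc ∑ s, nuSeq δ G τ τ' M μ₁ μ₂ k s * (Dx G τ τ' s x : ℝ)
      = ∑ y ∈ latNbrs (x : Fin d → ℤ), ∑ s, nuSeq δ G τ τ' M μ₁ μ₂ k s *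
          (if fullConf G τ s.1 y = fullConf G τ' s.2 y then (0:ℝ) else 1) := by
        rw [Finset.sum_comm]
        refine Finset.sum_congr rfl fun s _ => ?_
        rw [hexp s, Finset.mul_sum]
    _ ≤ ∑ y ∈ latNbrs (x : Fin d → ℤ), rhohat δ G τ τ' M μ₁ μ₂ u k y := by
        refine Finset.sum_le_sum fun y _ => ?_
        by_cases hyG : y ∈ G
        · have he : ∀ s : Conf G × Conf G,
              (if fullConf G τ s.1 y = fullConf G τ' s.2 y then (0:ℝ) else 1)
                = fneq G ⟨y, hyG⟩ s := by
            intro s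
            rw [fullConf, dif_pos hyG, fullConf, dif_pos hyG, fneq]
          rw [Finset.sum_congr rfl fun s _ => by rw [he s]]
          rw [rhohat, dif_pos hyG]
          exact le_of_eq rfl
        · have hc : ∀ s : Conf G × Conf G,
              (if fullConf G τ s.1 y = fullConf G τ' s.2 y then (0:ℝ) else 1)
                = (if (if h' : y ∈ boxBoundary G then τ ⟨y, h'⟩ else false)
                    = (if h' : y ∈ boxBoundary G then τ' ⟨y, h'⟩ else false) then (0:ℝ) else 1) := by
            intro s
            rw [fullConf, dif_neg hyG, fullConf, dif_neg hyG]
          rw [Finset.sum_congr rfl fun s _ => by rw [hc s]]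
          rw [← Finset.sum_mul, nuSeq_total δ G τ τ' M μ₁ μ₂ hμ1 hμ2 k, one_mul]
          rw [rhohat, dif_neg hyG]
          by_cases hyu : y = u
          · rw [if_pos hyu]
            by_cases hb : y ∈ boxBoundary G
            · rw [dif_pos hb, dif_pos hb]
              split <;> norm_num
            · rw [dif_neg hb, dif_neg hb, if_pos rfl]
              norm_num
          · rw [if_neg hyu]
            by_cases hyB : y ∈ boxBoundary G
            · rw [dif_pos hyB, dif_pos hyB, hagree ⟨y, hyB⟩ hyu, if_pos rfl]
            · rw [dif_neg hyB, dif_neg hyB, if_pos rfl]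

include hδ hd hM hT h1 h2 hμ1 hμ2 in
lemma key_step (hagree : ∀ w : {y // y ∈ boxBoundary G}, (w : Fin d → ℤ) ≠ u → τ w = τ' w)
    (k : ℕ) (x : {x // x ∈ G}) :
    ∑ s, nuSeq δ G τ τ' M μ₁ μ₂ k s *
        ((aR δ G τ τ' s x + bR δ G τ τ' s x) * (1 - 2 * fneq G x s))
      ≤ (1/(2*δ+1)) * ((1/(2*(d:ℝ))) *
          ∑ y ∈ latNbrs (x : Fin d → ℤ), rhohat δ G τ τ' M μ₁ μ₂ u k y)
        - rho δ G τ τ' M μ₁ μ₂ k x := by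
  have hstep1 : ∑ s, nuSeq δ G τ τ' M μ₁ μ₂ k s *
        ((aR δ G τ τ' s x + bR δ G τ τ' s x) * (1 - 2 * fneq G x s))
      ≤ ∑ s, nuSeq δ G τ τ' M μ₁ μ₂ k s *
        ((1/(2*δ+1)) * ((1/(2*(d:ℝ))) * (Dx G τ τ' s x : ℝ)) - fneq G x s) := by
    refine Finset.sum_le_sum fun s _ => ?_
    exact mul_le_mul_of_nonneg_left (ab_bound δ G τ τ' hδ hd s x)
      (nuSeq_nonneg δ G τ τ' M μ₁ μ₂ hδ hM hT h1 h2 k s)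
  have hstep2 : ∑ s, nuSeq δ G τ τ' M μ₁ μ₂ k s *
        ((1/(2*δ+1)) * ((1/(2*(d:ℝ))) * (Dx G τ τ' s x : ℝ)) - fneq G x s)
      = (1/(2*δ+1)) * ((1/(2*(d:ℝ))) *
          ∑ s, nuSeq δ G τ τ' M μ₁ μ₂ k s * (Dx G τ τ' s x : ℝ))
        - rho δ G τ τ' M μ₁ μ₂ k x := by
    rw [rho, Finset.mul_sum, Finset.mul_sum, ← Finset.sum_sub_distrib]
    refine Finset.sum_congr rfl fun s _ => by ring
  have hstep3 := Dsum_le δ G τ τ' M μ₁ μ₂ u hδ hd hM hT h1 h2 hμ1 hμ2 hagree k x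
  have hα : (0:ℝ) ≤ (1/(2*δ+1)) * (1/(2*(d:ℝ))) := by positivity
  calc ∑ s, nuSeq δ G τ τ' M μ₁ μ₂ k s *
        ((aR δ G τ τ' s x + bR δ G τ τ' s x) * (1 - 2 * fneq G x s))
      ≤ (1/(2*δ+1)) * ((1/(2*(d:ℝ))) *
          ∑ s, nuSeq δ G τ τ' M μ₁ μ₂ k s * (Dx G τ τ' s x : ℝ))
        - rho δ G τ τ' M μ₁ μ₂ k x := by rw [← hstep2]; exact hstep1
    _ ≤ (1/(2*δ+1)) * ((1/(2*(d:ℝ))) *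
          ∑ y ∈ latNbrs (x : Fin d → ℤ), rhohat δ G τ τ' M μ₁ μ₂ u k y)
        - rho δ G τ τ' M μ₁ μ₂ k x := by
        have := mul_le_mul_of_nonneg_left hstep3 hα
        nlinarith [this]

end Rho
section Avg
variable {d : ℕ} (δ : ℝ) (G : Finset (Fin d → ℤ)) (τ τ' : {y // y ∈ boxBoundary G} → Bool)
  (M : ℝ) (μ₁ μ₂ : Conf G → ℝ) (u : Fin d → ℤ) (n : ℕ)

noncomputable def gbar (y : Fin d → ℤ) : ℝ :=
  (1/(n:ℝ)) * ∑ k ∈ Finset.range n, rhohat δ G τ τ' M μ₁ μ₂ u k y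

variable (hδ : 0 < δ) (hd : 1 ≤ d) (hM : 0 < M) (hT : ∀ s, TT δ G τ τ' s ≤ M)
  (h1 : ∀ η, 0 ≤ μ₁ η) (h2 : ∀ η, 0 ≤ μ₂ η)
  (hμ1 : ∑ η, μ₁ η = 1) (hμ2 : ∑ η, μ₂ η = 1)

include hδ hM hT h1 h2 hμ1 hμ2 in
lemma gbar_le_one (hn : 1 ≤ n) (y : Fin d → ℤ) : gbar δ G τ τ' M μ₁ μ₂ u n y ≤ 1 := by
  unfold gbar
  have hsum : ∑ k ∈ Finset.range n, rhohat δ G τ τ' M μ₁ μ₂ u k y ≤ (n:ℝ) := by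
    calc ∑ k ∈ Finset.range n, rhohat δ G τ τ' M μ₁ μ₂ u k y
        ≤ ∑ _k ∈ Finset.range n, (1:ℝ) := Finset.sum_le_sum fun k _ =>
          rhohat_le_one δ G τ τ' M μ₁ μ₂ u hδ hM hT h1 h2 hμ1 hμ2 k y
      _ = (n:ℝ) := by simp
  have hn0 : (0:ℝ) < (n:ℝ) := by exact_mod_cast hn
  rw [div_mul_eq_mul_div, one_mul, div_le_one hn0]
  exact hsum

lemma gbar_out (hy : y ∉ G) (hyu : y ≠ u) : gbar δ G τ τ' M μ₁ μ₂ u n y = 0 := by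
  unfold gbar
  rw [Finset.sum_eq_zero fun k _ => by rw [rhohat, dif_neg hy, if_neg hyu], mul_zero]

include hδ hd hM hT h1 h2 hμ1 hμ2 in
lemma gbar_rec (hagree : ∀ w : {y // y ∈ boxBoundary G}, (w : Fin d → ℤ) ≠ u → τ w = τ' w)
    (hn : 1 ≤ n) (x : {x // x ∈ G}) :
    gbar δ G τ τ' M μ₁ μ₂ u n (x : Fin d → ℤ)
      ≤ (1/(2*δ+1)) * ((1/(2*(d:ℝ))) *
          ∑ z ∈ latNbrs (x : Fin d → ℤ), gbar δ G τ τ' M μ₁ μ₂ u n z) + M / n := by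
  have htel : ∑ k ∈ Finset.range n,
      (rho δ G τ τ' M μ₁ μ₂ (k+1) x - rho δ G τ τ' M μ₁ μ₂ k x)
      = rho δ G τ τ' M μ₁ μ₂ n x - rho δ G τ τ' M μ₁ μ₂ 0 x :=
    Finset.sum_range_sub (fun k => rho δ G τ τ' M μ₁ μ₂ k x) n
  have hW : ∀ k, rho δ G τ τ' M μ₁ μ₂ (k+1) x - rho δ G τ τ' M μ₁ μ₂ k x
      = (1/M) * ∑ s, nuSeq δ G τ τ' M μ₁ μ₂ k s *
          ((aR δ G τ τ' s x + bR δ G τ τ' s x) * (1 - 2 * fneq G x s)) := by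
    intro k
    rw [rho_rec δ G τ τ' M μ₁ μ₂ k x]
    ring
  have hsumW : -M ≤ ∑ k ∈ Finset.range n, ∑ s, nuSeq δ G τ τ' M μ₁ μ₂ k s *
      ((aR δ G τ τ' s x + bR δ G τ τ' s x) * (1 - 2 * fneq G x s)) := by
    have e1 : (1/M) * ∑ k ∈ Finset.range n, ∑ s, nuSeq δ G τ τ' M μ₁ μ₂ k s *
        ((aR δ G τ τ' s x + bR δ G τ τ' s x) * (1 - 2 * fneq G x s))
        = rho δ G τ τ' M μ₁ μ₂ n x - rho δ G τ τ' M μ₁ μ₂ 0 x := by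
      rw [Finset.mul_sum, ← htel]
      exact Finset.sum_congr rfl fun k _ => (hW k).symm
    have h0 : 0 ≤ rho δ G τ τ' M μ₁ μ₂ 0 x :=
      rho_nonneg δ G τ τ' M μ₁ μ₂ hδ hM hT h1 h2 0 x
    have h0' : rho δ G τ τ' M μ₁ μ₂ 0 x ≤ 1 :=
      rho_le_one δ G τ τ' M μ₁ μ₂ hδ hM hT h1 h2 hμ1 hμ2 0 x
    have hn0 : 0 ≤ rho δ G τ τ' M μ₁ μ₂ n x :=
      rho_nonneg δ G τ τ' M μ₁ μ₂ hδ hM hT h1 h2 n x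
    have hge : -1 ≤ (1/M) * ∑ k ∈ Finset.range n, ∑ s, nuSeq δ G τ τ' M μ₁ μ₂ k s *
        ((aR δ G τ τ' s x + bR δ G τ τ' s x) * (1 - 2 * fneq G x s)) := by
      rw [e1]; linarith
    have hmul := mul_le_mul_of_nonneg_left hge (le_of_lt hM)
    have hMne : M ≠ 0 := ne_of_gt hM
    have e2 : M * ((1/M) * ∑ k ∈ Finset.range n, ∑ s, nuSeq δ G τ τ' M μ₁ μ₂ k s *
        ((aR δ G τ τ' s x + bR δ G τ τ' s x) * (1 - 2 * fneq G x s)))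
        = ∑ k ∈ Finset.range n, ∑ s, nuSeq δ G τ τ' M μ₁ μ₂ k s *
        ((aR δ G τ τ' s x + bR δ G τ τ' s x) * (1 - 2 * fneq G x s)) := by
      field_simp
    linarith [hmul, e2]
  have hkey : ∑ k ∈ Finset.range n, ∑ s, nuSeq δ G τ τ' M μ₁ μ₂ k s *
      ((aR δ G τ τ' s x + bR δ G τ τ' s x) * (1 - 2 * fneq G x s))
      ≤ (1/(2*δ+1)) * ((1/(2*(d:ℝ))) * ∑ z ∈ latNbrs (x : Fin d → ℤ),
          ∑ k ∈ Finset.range n, rhohat δ G τ τ' M μ₁ μ₂ u k z)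
        - ∑ k ∈ Finset.range n, rho δ G τ τ' M μ₁ μ₂ k x := by
    calc ∑ k ∈ Finset.range n, ∑ s, nuSeq δ G τ τ' M μ₁ μ₂ k s *
        ((aR δ G τ τ' s x + bR δ G τ τ' s x) * (1 - 2 * fneq G x s))
        ≤ ∑ k ∈ Finset.range n, ((1/(2*δ+1)) * ((1/(2*(d:ℝ))) *
            ∑ z ∈ latNbrs (x : Fin d → ℤ), rhohat δ G τ τ' M μ₁ μ₂ u k z)
          - rho δ G τ τ' M μ₁ μ₂ k x) :=
          Finset.sum_le_sum fun k _ =>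
            key_step δ G τ τ' M μ₁ μ₂ u hδ hd hM hT h1 h2 hμ1 hμ2 hagree k x
      _ = (1/(2*δ+1)) * ((1/(2*(d:ℝ))) * ∑ z ∈ latNbrs (x : Fin d → ℤ),
            ∑ k ∈ Finset.range n, rhohat δ G τ τ' M μ₁ μ₂ u k z)
          - ∑ k ∈ Finset.range n, rho δ G τ τ' M μ₁ μ₂ k x := by
          rw [Finset.sum_sub_distrib]
          congr 1
          rw [← Finset.mul_sum, ← Finset.mul_sum, Finset.sum_comm]
  have hmain : ∑ k ∈ Finset.range n, rho δ G τ τ' M μ₁ μ₂ k x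
      ≤ (1/(2*δ+1)) * ((1/(2*(d:ℝ))) * ∑ z ∈ latNbrs (x : Fin d → ℤ),
          ∑ k ∈ Finset.range n, rhohat δ G τ τ' M μ₁ μ₂ u k z) + M := by
    linarith [hsumW, hkey]
  have hgx : gbar δ G τ τ' M μ₁ μ₂ u n (x : Fin d → ℤ)
      = (1/(n:ℝ)) * ∑ k ∈ Finset.range n, rho δ G τ τ' M μ₁ μ₂ k x := by
    unfold gbar
    congr 1
    refine Finset.sum_congr rfl fun k _ => ?_
    rw [rhohat, dif_pos x.2]
  have hn0 : (0:ℝ) < (n:ℝ) := by exact_mod_cast hn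
  have hinv : (0:ℝ) ≤ 1/(n:ℝ) := by positivity
  have := mul_le_mul_of_nonneg_left hmain hinv
  rw [hgx]
  calc (1/(n:ℝ)) * ∑ k ∈ Finset.range n, rho δ G τ τ' M μ₁ μ₂ k x
      ≤ (1/(n:ℝ)) * ((1/(2*δ+1)) * ((1/(2*(d:ℝ))) * ∑ z ∈ latNbrs (x : Fin d → ℤ),
          ∑ k ∈ Finset.range n, rhohat δ G τ τ' M μ₁ μ₂ u k z) + M) := this
    _ = (1/(2*δ+1)) * ((1/(2*(d:ℝ))) *
          ∑ z ∈ latNbrs (x : Fin d → ℤ), gbar δ G τ τ' M μ₁ μ₂ u n z) + M / n := by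
        have hs : ∑ z ∈ latNbrs (x : Fin d → ℤ), gbar δ G τ τ' M μ₁ μ₂ u n z
            = (1/(n:ℝ)) * ∑ z ∈ latNbrs (x : Fin d → ℤ),
                ∑ k ∈ Finset.range n, rhohat δ G τ τ' M μ₁ μ₂ u k z := by
          unfold gbar
          rw [Finset.mul_sum]
        rw [hs]
        ring
  
end Avg

lemma max_principle {d : ℕ} (hd : 1 ≤ d) (G : Finset (Fin d → ℤ)) (u : Fin d → ℤ)
    (g : (Fin d → ℤ) → ℝ) (α e : ℝ) (hα0 : 0 < α) (hα1 : α < 1) (he : 0 ≤ e)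
    (hg1 : ∀ y, g y ≤ 1)
    (hout : ∀ y, y ∉ G → y ≠ u → g y = 0)
    (hrec : ∀ x : {x // x ∈ G}, g (x : Fin d → ℤ)
      ≤ α * ((1/(2*(d:ℝ))) * ∑ z ∈ latNbrs (x : Fin d → ℤ), g z) + e) :
    ∀ k : ℕ, ∀ y, k ≤ latDist y u → g y ≤ α ^ k + e / (1 - α) := by
  have h1a : 0 < 1 - α := by linarith
  have hE : 0 ≤ e / (1 - α) := by positivity
  intro k
  induction k with
  | zero =>
    intro y _
    have := hg1 y
    simp only [pow_zero]
    linarith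
  | succ k ih =>
    intro y hk
    have hyu : y ≠ u := by
      intro hy
      rw [hy] at hk
      rw [show latDist u u = 0 from latDist_eq_zero.mpr rfl] at hk
      omega
    by_cases hyG : y ∈ G
    · have hnb : ∀ z ∈ latNbrs y, g z ≤ α^k + e/(1-α) := by
        intro z hz
        apply ih
        have hadj : latDist y z = 1 := mem_latNbrs_iff_latAdj.mp hz
        have htri := latDist_triangle y z u
        omega
      have hsum : ∑ z ∈ latNbrs y, g z ≤ (2*(d:ℝ)) * (α^k + e/(1-α)) := by
        calc ∑ z ∈ latNbrs y, g z ≤ ∑ _z ∈ latNbrs y, (α^k + e/(1-α)) :=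
              Finset.sum_le_sum hnb
          _ = ((latNbrs y).card : ℝ) * (α^k + e/(1-α)) := by
              rw [Finset.sum_const, nsmul_eq_mul]
          _ = (2*(d:ℝ)) * (α^k + e/(1-α)) := by rw [card_latNbrs]; push_cast; ring
      have hd0 : (0:ℝ) < 2*(d:ℝ) := by
        have : (1:ℝ) ≤ (d:ℝ) := by exact_mod_cast hd
        linarith
      calc g y ≤ α * ((1/(2*(d:ℝ))) * ∑ z ∈ latNbrs y, g z) + e := hrec ⟨y, hyG⟩
        _ ≤ α * ((1/(2*(d:ℝ))) * ((2*(d:ℝ)) * (α^k + e/(1-α)))) + e := by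
            have h2 : (0:ℝ) ≤ 1/(2*(d:ℝ)) := by positivity
            have h3 := mul_le_mul_of_nonneg_left hsum h2
            have h4 := mul_le_mul_of_nonneg_left h3 (le_of_lt hα0)
            linarith
        _ = α * (α^k + e/(1-α)) + e := by
            congr 2
            field_simp
        _ = α^(k+1) + (α * (e/(1-α)) + e) := by rw [pow_succ]; ring
        _ = α^(k+1) + e/(1-α) := by
            congr 1
            field_simp
            ring
    · rw [hout y hyG hyu]
      positivity
section TV
variable {d : ℕ} (δ : ℝ) (G : Finset (Fin d → ℤ)) (τ τ' : {y // y ∈ boxBoundary G} → Bool)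
  (M : ℝ) (μ₁ μ₂ : Conf G → ℝ)

lemma proj_sum_eq (H : Finset (Fin d → ℤ)) (hHG : H ⊆ G) (μ : Conf G → ℝ)
    (A : Finset ({x // x ∈ H} → Bool)) :
    ∑ ζ ∈ A, projMeasure G H hHG μ ζ
      = ∑ η, μ η * (if (fun v : {x // x ∈ H} => η ⟨v.1, hHG v.2⟩) ∈ A then (1:ℝ) else 0) := by
  classical
  have e1 : ∀ ζ, projMeasure G H hHG μ ζ
      = ∑ η ∈ Finset.univ.filter
          (fun η : Conf G => (fun v : {x // x ∈ H} => η ⟨v.1, hHG v.2⟩) = ζ), μ η := by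
    intro ζ
    rw [projMeasure]
    congr 1
    ext η
    simp only [Finset.mem_filter, Finset.mem_univ, true_and]
    constructor
    · intro h; funext v; exact h v
    · intro h v; exact congrFun h v
  calc ∑ ζ ∈ A, projMeasure G H hHG μ ζ
      = ∑ ζ ∈ A, ∑ η ∈ Finset.univ.filter
          (fun η : Conf G => (fun v : {x // x ∈ H} => η ⟨v.1, hHG v.2⟩) = ζ), μ η :=
        Finset.sum_congr rfl fun ζ _ => e1 ζ
    _ = ∑ η ∈ Finset.univ.filter
          (fun η : Conf G => (fun v : {x // x ∈ H} => η ⟨v.1, hHG v.2⟩) ∈ A), μ η :=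
        Finset.sum_fiberwise_eq_sum_filter _ _ _ _
    _ = ∑ η, μ η * (if (fun v : {x // x ∈ H} => η ⟨v.1, hHG v.2⟩) ∈ A then (1:ℝ) else 0) := by
        rw [Finset.sum_filter]
        refine Finset.sum_congr rfl fun η _ => ?_
        split <;> simp

variable (hδ : 0 < δ) (hd : 1 ≤ d) (hM : 0 < M) (hT : ∀ s, TT δ G τ τ' s ≤ M)
  (h1 : ∀ η, 0 ≤ μ₁ η) (h2 : ∀ η, 0 ≤ μ₂ η)
  (hμ1 : ∑ η, μ₁ η = 1) (hμ2 : ∑ η, μ₂ η = 1)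
  (hQ1 : Matrix.vecMul μ₁ (boxQ δ G τ) = 0) (hQ2 : Matrix.vecMul μ₂ (boxQ δ G τ') = 0)

include hδ hM hT h1 h2 hμ1 hμ2 hQ1 hQ2 in
lemma tv_step (H : Finset (Fin d → ℤ)) (hHG : H ⊆ G) (k : ℕ)
    (A : Finset ({x // x ∈ H} → Bool)) :
    |∑ ζ ∈ A, projMeasure G H hHG μ₁ ζ - ∑ ζ ∈ A, projMeasure G H hHG μ₂ ζ|
      ≤ ∑ v : {x // x ∈ H}, rho δ G τ τ' M μ₁ μ₂ k ⟨v.1, hHG v.2⟩ := by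
  classical
  set ind : Conf G → ℝ :=
    fun η => if (fun v : {x // x ∈ H} => η ⟨v.1, hHG v.2⟩) ∈ A then (1:ℝ) else 0 with hind
  have e1 : ∑ ζ ∈ A, projMeasure G H hHG μ₁ ζ
      = ∑ s, nuSeq δ G τ τ' M μ₁ μ₂ k s * ind s.1 := by
    rw [proj_sum_eq G H hHG μ₁ A, ← nuSeq_fst δ G τ τ' M μ₁ μ₂ hμ2 hQ1 k ind]
  have e2 : ∑ ζ ∈ A, projMeasure G H hHG μ₂ ζ
      = ∑ s, nuSeq δ G τ τ' M μ₁ μ₂ k s * ind s.2 := by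
    rw [proj_sum_eq G H hHG μ₂ A, ← nuSeq_snd δ G τ τ' M μ₁ μ₂ hμ1 hQ2 k ind]
  have e3 : ∑ s, nuSeq δ G τ τ' M μ₁ μ₂ k s * ind s.1
        - ∑ s, nuSeq δ G τ τ' M μ₁ μ₂ k s * ind s.2
      = ∑ s, nuSeq δ G τ τ' M μ₁ μ₂ k s * (ind s.1 - ind s.2) := by
    rw [← Finset.sum_sub_distrib]
    exact Finset.sum_congr rfl fun s _ => by ring
  rw [e1, e2, e3]
  have hpt : ∀ s : Conf G × Conf G,
      |ind s.1 - ind s.2| ≤ ∑ v : {x // x ∈ H}, fneq G ⟨v.1, hHG v.2⟩ s := by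
    intro s
    have hnn : ∀ v ∈ (Finset.univ : Finset {x // x ∈ H}),
        (0:ℝ) ≤ fneq G ⟨v.1, hHG v.2⟩ s := fun v _ => fneq_nonneg G _ s
    by_cases hr : (fun v : {x // x ∈ H} => s.1 ⟨v.1, hHG v.2⟩)
        = (fun v : {x // x ∈ H} => s.2 ⟨v.1, hHG v.2⟩)
    · have : ind s.1 = ind s.2 := by rw [hind]; simp only [hr]
      rw [this, sub_self, abs_zero]
      exact Finset.sum_nonneg hnn
    · obtain ⟨v, hv⟩ := Function.ne_iff.mp hr
      have hone : fneq G ⟨v.1, hHG v.2⟩ s = 1 := by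
        rw [fneq, if_neg hv]
      have hle : (1:ℝ) ≤ ∑ v : {x // x ∈ H}, fneq G ⟨v.1, hHG v.2⟩ s := by
        rw [← hone]
        exact Finset.single_le_sum hnn (Finset.mem_univ v)
      have habs : |ind s.1 - ind s.2| ≤ 1 := by
        rw [hind]
        dsimp only
        split <;> split <;> norm_num
      linarith
  calc |∑ s, nuSeq δ G τ τ' M μ₁ μ₂ k s * (ind s.1 - ind s.2)|
      ≤ ∑ s, |nuSeq δ G τ τ' M μ₁ μ₂ k s * (ind s.1 - ind s.2)| := by
        refine Finset.abs_sum_le_sum_abs _ _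
    _ ≤ ∑ s, nuSeq δ G τ τ' M μ₁ μ₂ k s *
          (∑ v : {x // x ∈ H}, fneq G ⟨v.1, hHG v.2⟩ s) := by
        refine Finset.sum_le_sum fun s _ => ?_
        rw [abs_mul, abs_of_nonneg (nuSeq_nonneg δ G τ τ' M μ₁ μ₂ hδ hM hT h1 h2 k s)]
        exact mul_le_mul_of_nonneg_left (hpt s)
          (nuSeq_nonneg δ G τ τ' M μ₁ μ₂ hδ hM hT h1 h2 k s)
    _ = ∑ v : {x // x ∈ H}, rho δ G τ τ' M μ₁ μ₂ k ⟨v.1, hHG v.2⟩ := by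
        simp only [Finset.mul_sum]
        rw [Finset.sum_comm]
        rfl
  -- done
  
end TV

/-- Strong spatial mixing for the noisy voter model on `ℤ^d`, for every value of the noise
parameter `δ > 0`: there are constants `C, c > 0` such that for every finite box `G ⊂ ℤ^d`,
every box `H ⊆ G`, every site `u ∈ ∂G` and every pair of boundary conditions agreeing off
`u`, the stationary distributions of the corresponding dynamics on `G` satisfy
`‖μ_G^τ|_H − μ_G^{τ^u}|_H‖ ≤ C·|V(H)|·exp(−c·dist(u,H))`. -/
theorem noisy_voter_strong_spatial_mixing
    (d : ℕ) (hd : 1 ≤ d) (δ : ℝ) (hδ : 0 < δ) :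
    ∃ C > (0 : ℝ), ∃ c > (0 : ℝ),
      ∀ (G H : Finset (Fin d → ℤ)) (hHG : H ⊆ G) (u : Fin d → ℤ), u ∈ boxBoundary G →
      ∀ (τ τ' : {y // y ∈ boxBoundary G} → Bool),
        (∀ w : {y // y ∈ boxBoundary G}, (w : Fin d → ℤ) ≠ u → τ w = τ' w) →
      ∀ (μ₁ μ₂ : ({x // x ∈ G} → Bool) → ℝ),
        (∀ η, 0 ≤ μ₁ η) → (∑ η, μ₁ η = 1) → Matrix.vecMul μ₁ (boxQ δ G τ) = 0 →
        (∀ η, 0 ≤ μ₂ η) → (∑ η, μ₂ η = 1) → Matrix.vecMul μ₂ (boxQ δ G τ') = 0 →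
        tvDist (projMeasure G H hHG μ₁) (projMeasure G H hHG μ₂) ≤
          C * (H.card : ℝ) * Real.exp (-c * (distToBox u H : ℝ)) := by
  have h2δ : (1:ℝ) < 2*δ+1 := by linarith
  refine ⟨1, one_pos, Real.log (2*δ+1), Real.log_pos h2δ, ?_⟩
  intro G H hHG u hu τ τ' hagree μ₁ μ₂ h1 hμ1 hQ1 h2 hμ2 hQ2
  set α : ℝ := 1/(2*δ+1) with hα
  have hα0 : 0 < α := by rw [hα]; positivity
  have hα1 : α < 1 := by rw [hα, div_lt_one (by linarith)]; linarith
  have h1α : 0 < 1 - α := by linarith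
  obtain ⟨M, hMdef⟩ : ∃ M : ℝ, M = 2*(G.card:ℝ)*((1/(2*δ+1))*(1+δ)) + 1 := ⟨_, rfl⟩
  have hM : 0 < M := by
    rw [hMdef]
    have : (0:ℝ) ≤ 2*(G.card:ℝ)*((1/(2*δ+1))*(1+δ)) := by positivity
    linarith
  have hT : ∀ s, TT δ G τ τ' s ≤ M := by
    intro s
    have := TT_le δ G τ τ' hδ hd s
    rw [hMdef]
    linarith
  set K := distToBox u H with hK
  have main : ∀ n : ℕ, 1 ≤ n →
      tvDist (projMeasure G H hHG μ₁) (projMeasure G H hHG μ₂)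
        ≤ (H.card:ℝ) * α^K + (H.card:ℝ) * ((M/n)/(1-α)) := by
    intro n hn
    have hn0 : (0:ℝ) < (n:ℝ) := by exact_mod_cast hn
    have he0 : (0:ℝ) ≤ M/n := le_of_lt (by positivity)
    have hmp := max_principle hd G u (gbar δ G τ τ' M μ₁ μ₂ u n) α (M/n) hα0 hα1 he0
      (fun y => gbar_le_one δ G τ τ' M μ₁ μ₂ u n hδ hM hT h1 h2 hμ1 hμ2 hn y)
      (fun y hy hyu => gbar_out δ G τ τ' M μ₁ μ₂ u n hy hyu)
      (fun x => gbar_rec δ G τ τ' M μ₁ μ₂ u n hδ hd hM hT h1 h2 hμ1 hμ2 hagree hn x)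
      K
    rw [tvDist]
    apply Finset.sup'_le
    intro A hA
    have hdiff := fun k => tv_step δ G τ τ' M μ₁ μ₂ hδ hM hT h1 h2 hμ1 hμ2 hQ1 hQ2 H hHG k A
    set DA := |∑ ζ ∈ A, projMeasure G H hHG μ₁ ζ - ∑ ζ ∈ A, projMeasure G H hHG μ₂ ζ|
      with hDA
    have hvb : ∀ v : {x // x ∈ H},
        ∑ k ∈ Finset.range n, rho δ G τ τ' M μ₁ μ₂ k ⟨v.1, hHG v.2⟩
          ≤ (n:ℝ) * (α^K + (M/n)/(1-α)) := by
      intro v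
      have hg : gbar δ G τ τ' M μ₁ μ₂ u n v.1
          = (1/(n:ℝ)) * ∑ k ∈ Finset.range n, rho δ G τ τ' M μ₁ μ₂ k ⟨v.1, hHG v.2⟩ := by
        unfold gbar
        congr 1
        refine Finset.sum_congr rfl fun k _ => ?_
        rw [rhohat, dif_pos (hHG v.2)]
      have hdist : K ≤ latDist v.1 u := by
        rw [latDist_comm]
        exact Nat.sInf_le ⟨v.1, v.2, rfl⟩
      have hb := hmp v.1 hdist
      rw [hg] at hb
      have := mul_le_mul_of_nonneg_left hb (le_of_lt hn0)
      calc ∑ k ∈ Finset.range n, rho δ G τ τ' M μ₁ μ₂ k ⟨v.1, hHG v.2⟩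
          = (n:ℝ) * ((1/(n:ℝ)) * ∑ k ∈ Finset.range n,
              rho δ G τ τ' M μ₁ μ₂ k ⟨v.1, hHG v.2⟩) := by
            field_simp
        _ ≤ (n:ℝ) * (α^K + (M/n)/(1-α)) := this
    have hnsum : (n:ℝ) * DA ≤ ∑ k ∈ Finset.range n,
        ∑ v : {x // x ∈ H}, rho δ G τ τ' M μ₁ μ₂ k ⟨v.1, hHG v.2⟩ := by
      calc (n:ℝ) * DA = ∑ _k ∈ Finset.range n, DA := by
            rw [Finset.sum_const, Finset.card_range, nsmul_eq_mul]
        _ ≤ _ := Finset.sum_le_sum fun k _ => hdiff k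
    have hswap : ∑ k ∈ Finset.range n, ∑ v : {x // x ∈ H},
        rho δ G τ τ' M μ₁ μ₂ k ⟨v.1, hHG v.2⟩
        = ∑ v : {x // x ∈ H}, ∑ k ∈ Finset.range n,
            rho δ G τ τ' M μ₁ μ₂ k ⟨v.1, hHG v.2⟩ := Finset.sum_comm
    have hfin : ∑ v : {x // x ∈ H}, ∑ k ∈ Finset.range n,
        rho δ G τ τ' M μ₁ μ₂ k ⟨v.1, hHG v.2⟩
        ≤ (H.card:ℝ) * ((n:ℝ) * (α^K + (M/n)/(1-α))) := by
      calc ∑ v : {x // x ∈ H}, ∑ k ∈ Finset.range n,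
            rho δ G τ τ' M μ₁ μ₂ k ⟨v.1, hHG v.2⟩
          ≤ ∑ _v : {x // x ∈ H}, (n:ℝ) * (α^K + (M/n)/(1-α)) :=
            Finset.sum_le_sum fun v _ => hvb v
        _ = (H.card:ℝ) * ((n:ℝ) * (α^K + (M/n)/(1-α))) := by
            rw [Finset.sum_const, Finset.card_univ, Fintype.card_coe, nsmul_eq_mul]
    have hDAle : DA ≤ (H.card:ℝ) * (α^K + (M/n)/(1-α)) := by
      have hchain : (n:ℝ) * DA ≤ (H.card:ℝ) * ((n:ℝ) * (α^K + (M/n)/(1-α))) := by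
        rw [hswap] at hnsum
        linarith
      have := mul_le_mul_of_nonneg_left hchain (le_of_lt (by positivity : (0:ℝ) < 1/(n:ℝ)))
      calc DA = (1/(n:ℝ)) * ((n:ℝ) * DA) := by field_simp
        _ ≤ (1/(n:ℝ)) * ((H.card:ℝ) * ((n:ℝ) * (α^K + (M/n)/(1-α)))) := this
        _ = (H.card:ℝ) * (α^K + (M/n)/(1-α)) := by field_simp
    calc |∑ ζ ∈ A, projMeasure G H hHG μ₁ ζ - ∑ ζ ∈ A, projMeasure G H hHG μ₂ ζ|
        = DA := rfl
      _ ≤ (H.card:ℝ) * (α^K + (M/n)/(1-α)) := hDAle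
      _ = (H.card:ℝ) * α^K + (H.card:ℝ) * ((M/n)/(1-α)) := by ring
  have hexpK : (1:ℝ) * (H.card:ℝ) * Real.exp (-(Real.log (2*δ+1)) * (K:ℝ))
      = (H.card:ℝ) * α^K := by
    rw [one_mul]
    congr 1
    have hαexp : α = Real.exp (-(Real.log (2*δ+1))) := by
      rw [Real.exp_neg, Real.exp_log (by linarith), hα, one_div]
    rw [hαexp, ← Real.exp_nat_mul]
    congr 1
    ring
  rw [show (-(Real.log (2*δ+1)) * (K:ℝ)) = (-Real.log (2*δ+1) * (K:ℝ)) from by ring] at hexpK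
  rw [← hK] at *
  refine le_of_forall_pos_le_add ?_
  intro ε hε
  obtain ⟨n0, hn0⟩ := exists_nat_ge ((H.card:ℝ) * M / (1-α) / ε)
  set n := max 1 n0 with hn
  have hn1 : 1 ≤ n := le_max_left _ _
  have hnn0 : (0:ℝ) < (n:ℝ) := by exact_mod_cast hn1
  have hmain := main n hn1
  have hB : (H.card:ℝ) * ((M/n)/(1-α)) ≤ ε := by
    have hn0' : ((n0:ℝ)) ≤ (n:ℝ) := by exact_mod_cast le_max_right 1 n0
    have h1 : (H.card:ℝ) * M / (1-α) / ε ≤ (n:ℝ) := le_trans hn0 hn0'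
    have h2 : (H.card:ℝ) * M / (1-α) ≤ (n:ℝ) * ε := by
      rw [div_le_iff₀ hε] at h1
      linarith
    have h3 : (H.card:ℝ) * ((M/n)/(1-α)) = ((H.card:ℝ) * M / (1-α)) / (n:ℝ) := by
      field_simp
    rw [h3, div_le_iff₀ hnn0]
    linarith
  calc tvDist (projMeasure G H hHG μ₁) (projMeasure G H hHG μ₂)
      ≤ (H.card:ℝ) * α^K + (H.card:ℝ) * ((M/n)/(1-α)) := hmain
    _ ≤ (H.card:ℝ) * α^K + ε := by linarith
    _ = 1 * (H.card:ℝ) * Real.exp (-Real.log (2*δ+1) * (K:ℝ)) + ε := by rw [hexpK]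
end

section
/- The two-parameter noisy voter model also has optimal temporal mixing: for all δ > 0 and β > 0, the spin system on any finite graph G with n vertices whose flip rates are c(x,η) = (1/(δ+β+1))·[(1/d(x))·#{y : y ~ x, η(y) ≠ η(x)} + δ·1{η(x)=0} + β·1{η(x)=1}] satisfies, for every pair of initial configurations η, ξ ∈ {0,1}^{V(G)} and every t ≥ 0, ‖P_t(η,·) − P_t(ξ,·)‖ ≤ n·exp(−((δ+β)/(δ+β+1))·t), where P_t = exp(tQ) and Q is the associated rate matrix. -/
open Finset

/-- Flip rate of the two-parameter noisy voter model at vertex `x` in configuration `η`: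
`c(x,η) = (1/(δ+β+1))·[(1/d(x))·#{y ~ x : η(y) ≠ η(x)} + δ·1{η(x)=0} + β·1{η(x)=1}]`. -/
noncomputable def nv2Rate {V : Type*} [Fintype V] (G : SimpleGraph V) [DecidableRel G.Adj]
    (δ β : ℝ) (x : V) (η : V → Bool) : ℝ :=
  (1 / (δ + β + 1)) *
    ((1 / (G.degree x : ℝ)) * ((Finset.univ.filter fun y => G.Adj x y ∧ η y ≠ η x).card : ℝ)
      + δ * (if η x = false then 1 else 0) + β * (if η x = true then 1 else 0))

/-- The rate matrix of the two-parameter noisy voter model. -/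
noncomputable def nv2Q {V : Type*} [Fintype V] [DecidableEq V] (G : SimpleGraph V)
    [DecidableRel G.Adj] (δ β : ℝ) : Matrix (V → Bool) (V → Bool) ℝ := fun η η' =>
  if η = η' then -∑ x, nv2Rate G δ β x η
  else if (Finset.univ.filter fun v => η v ≠ η' v).card = 1 then
    ∑ x ∈ Finset.univ.filter (fun v => η v ≠ η' v), nv2Rate G δ β x η
  else 0

section ExpLemmas
open Nat NormedSpace

theorem matSummable {m : Type*} [Fintype m] [DecidableEq m] (M : Matrix m m ℝ) :
    Summable fun n : ℕ => ((n ! : ℝ))⁻¹ • M ^ n := by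
  letI : SeminormedRing (Matrix m m ℝ) := Matrix.linftyOpSemiNormedRing
  letI : NormedRing (Matrix m m ℝ) := Matrix.linftyOpNormedRing
  letI : NormedAlgebra ℝ (Matrix m m ℝ) := Matrix.linftyOpNormedAlgebra
  exact expSeries_summable' (𝕂 := ℝ) M

theorem mapExp {m : Type*} [Fintype m] [DecidableEq m] {W : Type*} [AddCommGroup W]
    [Module ℝ W] [TopologicalSpace W] [IsTopologicalAddGroup W] [T2Space W]
    [ContinuousConstSMul ℝ W] (L : Matrix m m ℝ →ₗ[ℝ] W) (hc : Continuous L)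
    (M : Matrix m m ℝ) :
    L (exp M) = ∑' n : ℕ, ((n ! : ℝ))⁻¹ • L (M ^ n) := by
  rw [exp_eq_tsum ℝ]
  have := ContinuousLinearMap.map_tsum ⟨L, hc⟩ (matSummable M)
  simp only [ContinuousLinearMap.coe_mk'] at this
  simp only [this, map_smul]

/-- Intertwining: if `A * X = X * B` then `exp A * X = X * exp B`. -/
theorem expIntertwine {m p : Type*} [Fintype m] [DecidableEq m] [Fintype p] [DecidableEq p]
    (A : Matrix m m ℝ) (B : Matrix p p ℝ) (X : Matrix m p ℝ) (h : A * X = X * B) :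
    exp A * X = X * exp B := by
  have key : ∀ n : ℕ, A ^ n * X = X * B ^ n := by
    intro n
    induction n with
    | zero => simp
    | succ n ih => rw [pow_succ, pow_succ, Matrix.mul_assoc, h, ← Matrix.mul_assoc, ih,
        Matrix.mul_assoc]
  let L1 : Matrix m m ℝ →ₗ[ℝ] Matrix m p ℝ :=
    { toFun := fun M => M * X, map_add' := fun a b => Matrix.add_mul a b X,
      map_smul' := fun c a => Matrix.smul_mul c a X }
  let L2 : Matrix p p ℝ →ₗ[ℝ] Matrix m p ℝ :=
    { toFun := fun M => X * M, map_add' := fun a b => Matrix.mul_add X a b,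
      map_smul' := fun c a => by simp only [RingHom.id_apply]; rw [Matrix.mul_smul] }
  have h1 := mapExp L1 (LinearMap.continuous_of_finiteDimensional L1) A
  have h2 := mapExp L2 (LinearMap.continuous_of_finiteDimensional L2) B
  simp only [L1, L2, LinearMap.coe_mk, AddHom.coe_mk] at h1 h2
  rw [h1, h2]
  congr 1
  ext n : 1
  rw [key n]

/-- Entries of `exp` as a tsum. -/
theorem expEntry {m : Type*} [Fintype m] [DecidableEq m] (M : Matrix m m ℝ) (i j : m) :
    exp M i j = ∑' n : ℕ, ((n ! : ℝ))⁻¹ • (M ^ n) i j := by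
  let L : Matrix m m ℝ →ₗ[ℝ] ℝ :=
    { toFun := fun M => M i j, map_add' := fun a b => rfl, map_smul' := fun c a => rfl }
  exact mapExp L (LinearMap.continuous_of_finiteDimensional L) M

theorem powNonneg {m : Type*} [Fintype m] [DecidableEq m] {M : Matrix m m ℝ}
    (h : ∀ i j, 0 ≤ M i j) (n : ℕ) : ∀ i j, 0 ≤ (M ^ n) i j := by
  induction n with
  | zero => intro i j; by_cases hij : i = j <;> simp [pow_zero, Matrix.one_apply, hij]
  | succ n ih =>
    intro i j
    rw [pow_succ, Matrix.mul_apply]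
    exact Finset.sum_nonneg fun k _ => mul_nonneg (ih i k) (h k j)

theorem expNonnegOfNonneg {m : Type*} [Fintype m] [DecidableEq m] {M : Matrix m m ℝ}
    (h : ∀ i j, 0 ≤ M i j) (i j : m) : 0 ≤ exp M i j := by
  rw [expEntry]
  refine tsum_nonneg fun n => ?_
  exact smul_nonneg (by positivity) (powNonneg h n i j)

/-- If off-diagonal entries are nonnegative, `exp M` is entrywise nonnegative. -/
theorem expNonneg {m : Type*} [Fintype m] [DecidableEq m] {M : Matrix m m ℝ}
    (h : ∀ i j, i ≠ j → 0 ≤ M i j) (i j : m) : 0 ≤ exp M i j := by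
  haveI : Nonempty m := ⟨i⟩
  set lam : ℝ := Finset.univ.sup' Finset.univ_nonempty (fun k => -M k k) with hlam
  have hN : ∀ a b, 0 ≤ (M + lam • (1 : Matrix m m ℝ)) a b := by
    intro a b
    by_cases hab : a = b
    · subst hab
      simp only [Matrix.add_apply, Matrix.smul_apply, Matrix.one_apply_eq, smul_eq_mul, mul_one]
      have : -M a a ≤ lam := by
        exact Finset.le_sup' (fun k => -M k k) (Finset.mem_univ a)
      linarith
    · simp only [Matrix.add_apply, Matrix.smul_apply, Matrix.one_apply_ne hab, smul_eq_mul,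
        mul_zero, add_zero]
      exact h a b hab
  letI : SeminormedRing (Matrix m m ℝ) := Matrix.linftyOpSemiNormedRing
  letI : NormedRing (Matrix m m ℝ) := Matrix.linftyOpNormedRing
  letI : NormedAlgebra ℝ (Matrix m m ℝ) := Matrix.linftyOpNormedAlgebra
  have hM : M = (M + lam • 1) + (-lam) • (1 : Matrix m m ℝ) := by
    rw [add_assoc, ← add_smul]; simp
  have hcomm : Commute (M + lam • (1 : Matrix m m ℝ)) ((-lam) • (1 : Matrix m m ℝ)) := by
    unfold Commute SemiconjBy
    rw [Matrix.mul_smul, Matrix.smul_mul, Matrix.mul_one, Matrix.one_mul]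
  letI : NormedAlgebra ℚ (Matrix m m ℝ) := NormedAlgebra.restrictScalars ℚ ℝ _
  have := exp_add_of_commute hcomm
  rw [hM]; erw [this]
  have hsc : exp ((-lam) • (1 : Matrix m m ℝ)) = Real.exp (-lam) • (1 : Matrix m m ℝ) := by
    rw [← Algebra.algebraMap_eq_smul_one]; erw [← algebraMap_exp_comm]; rw [Real.exp_eq_exp_ℝ,
      Algebra.algebraMap_eq_smul_one]
  erw [hsc]; rw [Matrix.mul_smul, Matrix.mul_one, Matrix.smul_apply, smul_eq_mul]
  exact mul_nonneg (Real.exp_nonneg _) (expNonnegOfNonneg hN i j)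

/-- If the all-ones row vector is a left eigenvector with eigenvalue `c`, then it is a left
eigenvector of `exp M` with eigenvalue `Real.exp c`. -/
theorem expVecMulOnes {m : Type*} [Fintype m] [DecidableEq m] (M : Matrix m m ℝ) (c : ℝ)
    (h : Matrix.vecMul (fun _ => (1:ℝ)) M = c • (fun _ => (1:ℝ))) :
    Matrix.vecMul (fun _ => (1:ℝ)) (exp M) = Real.exp c • (fun _ => (1:ℝ)) := by
  let L : Matrix m m ℝ →ₗ[ℝ] (m → ℝ) :=
    { toFun := fun M => Matrix.vecMul (fun _ => (1:ℝ)) M,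
      map_add' := fun a b => Matrix.vecMul_add a b _,
      map_smul' := fun r a => by
        ext i
        simp [Matrix.vecMul, dotProduct, Finset.mul_sum] }
  have key : ∀ n : ℕ, Matrix.vecMul (fun _ => (1:ℝ)) (M ^ n) = c ^ n • (fun _ => (1:ℝ)) := by
    intro n
    induction n with
    | zero => simp [Matrix.vecMul_one]
    | succ n ih =>
      rw [pow_succ, ← Matrix.vecMul_vecMul, ih, Matrix.smul_vecMul, h, smul_smul, ← pow_succ]
  have h1 := mapExp L (LinearMap.continuous_of_finiteDimensional L) M
  simp only [L, LinearMap.coe_mk, AddHom.coe_mk] at h1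
  rw [h1]
  simp only [key, smul_smul]
  rw [Summable.tsum_smul_const]
  · congr 1
    rw [Real.exp_eq_exp_ℝ, exp_eq_tsum ℝ]
    simp [smul_eq_mul]
  · exact (expSeries_summable' (𝕂 := ℝ) c).congr (by simp)

end ExpLemmas

open NormedSpace in
/-- Elementary generator of a deterministic move `g` applied at rate `r`. -/
noncomputable def genM {S : Type*} [DecidableEq S] (g : S → S) (r : ℝ) : Matrix S S ℝ :=
  fun s s' => r * ((if g s = s' then 1 else 0) - (if s = s' then 1 else 0))

theorem genM_mul_apply {S : Type*} [Fintype S] [DecidableEq S] (g : S → S) (r : ℝ) (s : S)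
    (f : S → ℝ) : ∑ s', genM g r s s' * f s' = r * (f (g s) - f s) := by
  simp only [genM, mul_assoc, ← Finset.mul_sum]
  congr 1
  simp only [sub_mul, Finset.sum_sub_distrib, ite_mul, one_mul, zero_mul]
  rw [Fintype.sum_ite_eq, Fintype.sum_ite_eq]

section Model
set_option linter.unusedSectionVars false
variable {V : Type*} [Fintype V] [DecidableEq V] (G : SimpleGraph V) [DecidableRel G.Adj]
  (δ β : ℝ)

def nvMove (i : V × (Bool ⊕ V)) (σ : V → Bool) : V → Bool :=
  match i with
  | (x, .inl b) => Function.update σ x b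
  | (x, .inr y) => Function.update σ x (σ y)

noncomputable def nvRate (i : V × (Bool ⊕ V)) : ℝ :=
  match i with
  | (_, .inl true) => δ / (δ + β + 1)
  | (_, .inl false) => β / (δ + β + 1)
  | (x, .inr y) => if G.Adj x y then 1 / ((δ + β + 1) * (G.degree x : ℝ)) else 0

noncomputable def Qone : Matrix (V → Bool) (V → Bool) ℝ :=
  ∑ i : V × (Bool ⊕ V), genM (nvMove i) (nvRate G δ β i)

theorem Qone_apply (σ σ' : V → Bool) :
    Qone G δ β σ σ' = ∑ x : V,
      ((δ / (δ + β + 1)) * ((if Function.update σ x true = σ' then (1:ℝ) else 0)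
          - (if σ = σ' then 1 else 0))
        + (β / (δ + β + 1)) * ((if Function.update σ x false = σ' then (1:ℝ) else 0)
          - (if σ = σ' then 1 else 0))
        + ∑ y : V, (if G.Adj x y then 1 / ((δ + β + 1) * (G.degree x : ℝ)) else 0) *
            ((if Function.update σ x (σ y) = σ' then (1:ℝ) else 0)
              - (if σ = σ' then 1 else 0))) := by
  simp only [Qone, Finset.sum_apply, Matrix.sum_apply]
  rw [Fintype.sum_prod_type]
  refine Finset.sum_congr rfl fun x _ => ?_
  rw [Fintype.sum_sum_type]
  rw [Fintype.sum_bool]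
  simp only [genM, nvMove, nvRate]
  rfl

theorem card_filter_real (σ : V → Bool) (x : V) :
    ((Finset.univ.filter fun y => G.Adj x y ∧ σ y ≠ σ x).card : ℝ)
      = ∑ y : V, if G.Adj x y ∧ σ y ≠ σ x then (1:ℝ) else 0 := by
  rw [Finset.card_filter]
  push_cast
  exact Finset.sum_congr rfl fun y _ => by split <;> simp

theorem rate_identity (hδ : 0 < δ) (hβ : 0 < β) (σ : V → Bool) (x : V)
    (hd : 1 ≤ G.degree x) :
    δ / (δ + β + 1) * (if σ x = false then 1 else 0)
      + β / (δ + β + 1) * (if σ x = true then 1 else 0)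
      + ∑ y : V, (if G.Adj x y then 1 / ((δ + β + 1) * (G.degree x : ℝ)) else 0) *
          (if σ y ≠ σ x then (1:ℝ) else 0)
    = nv2Rate G δ β x σ := by
  have hde : (0:ℝ) < (G.degree x : ℝ) := by exact_mod_cast hd
  have hsb : (0:ℝ) < δ + β + 1 := by linarith
  have hsum : ∑ y : V, (if G.Adj x y then 1 / ((δ + β + 1) * (G.degree x : ℝ)) else 0) *
      (if σ y ≠ σ x then (1:ℝ) else 0)
      = (1 / ((δ + β + 1) * (G.degree x : ℝ))) *
        ∑ y : V, if G.Adj x y ∧ σ y ≠ σ x then (1:ℝ) else 0 := by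
    rw [Finset.mul_sum]
    refine Finset.sum_congr rfl fun y _ => ?_
    by_cases h1 : G.Adj x y <;> by_cases h2 : σ y ≠ σ x <;> simp [h1, h2]
  rw [hsum, nv2Rate, card_filter_real]
  cases hσ : σ x <;> simp only [hσ] <;> norm_num <;> field_simp <;> ring

theorem Qone_eq (hδ : 0 < δ) (hβ : 0 < β) (hdeg : ∀ v, 1 ≤ G.degree v) :
    Qone G δ β = nv2Q G δ β := by
  ext σ σ'
  rw [Qone_apply]
  simp only [nv2Q]
  by_cases h : σ = σ'
  · subst h
    rw [if_pos rfl]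
    simp only [if_pos rfl]
    rw [← Finset.sum_neg_distrib]
    refine Finset.sum_congr rfl fun x _ => ?_
    rw [← rate_identity G δ β hδ hβ σ x (hdeg x)]
    have h1 : (if Function.update σ x true = σ then (1:ℝ) else 0) - 1
        = -(if σ x = false then 1 else 0) := by
      cases hσ : σ x <;> simp [Function.update_eq_self_iff, hσ]
    have h2 : (if Function.update σ x false = σ then (1:ℝ) else 0) - 1
        = -(if σ x = true then 1 else 0) := by
      cases hσ : σ x <;> simp [Function.update_eq_self_iff, hσ]
    have h3 : ∀ y, (if Function.update σ x (σ y) = σ then (1:ℝ) else 0) - 1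
        = -(if σ y ≠ σ x then 1 else 0) := by
      intro y
      by_cases hy : σ y = σ x <;> simp [Function.update_eq_self_iff, hy]
    simp only [h1, h2, h3, mul_neg, Finset.sum_neg_distrib]
    ring
  · rw [if_neg h]
    rw [if_neg h]
    have hind : (if σ = σ' then (1:ℝ) else 0) = 0 := if_neg h
    by_cases hc : (Finset.univ.filter fun v => σ v ≠ σ' v).card = 1
    · rw [if_pos hc]
      obtain ⟨v, hv⟩ := Finset.card_eq_one.mp hc
      have hvv : σ v ≠ σ' v := by
        have : v ∈ Finset.univ.filter fun v => σ v ≠ σ' v := hv ▸ Finset.mem_singleton_self v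
        exact (Finset.mem_filter.mp this).2
      have hagree : ∀ y, y ≠ v → σ y = σ' y := by
        intro y hy
        by_contra hne
        have hmem : y ∈ Finset.univ.filter fun v => σ v ≠ σ' v :=
          Finset.mem_filter.mpr ⟨Finset.mem_univ _, hne⟩
        rw [hv, Finset.mem_singleton] at hmem
        exact hy hmem
      have hupd : ∀ b, (Function.update σ v b = σ') ↔ b = σ' v := by
        intro b
        constructor
        · intro hb; rw [← hb]; simp
        · intro hb; funext y
          rcases eq_or_ne y v with rfl | hy
          · simp [hb]
          · rw [Function.update_apply, if_neg hy, hagree y hy]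
      have hflip : σ' v = !(σ v) := by
        cases h1 : σ v <;> cases h2 : σ' v <;> simp_all
      rw [hv, Finset.sum_singleton]
      rw [Finset.sum_eq_single v]
      · have hT : (if Function.update σ v true = σ' then (1:ℝ) else 0)
            = (if σ v = false then 1 else 0) := by
          simp only [hupd]
          cases hσ : σ v <;> simp [hflip, hσ]
        have hF : (if Function.update σ v false = σ' then (1:ℝ) else 0)
            = (if σ v = true then 1 else 0) := by
          simp only [hupd]
          cases hσ : σ v <;> simp [hflip, hσ]
        have hY : ∀ y, (if Function.update σ v (σ y) = σ' then (1:ℝ) else 0)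
            = (if σ y ≠ σ v then 1 else 0) := by
          intro y
          simp only [hupd]
          cases hσ : σ v <;> cases hσy : σ y <;> simp [hflip, hσ, hσy]
        simp only [hT, hF, hY, hind, sub_zero]
        exact rate_identity G δ β hδ hβ σ v (hdeg v)
      · intro x _ hx
        have hzero : ∀ b, (Function.update σ x b = σ') = False := by
          intro b
          simp only [eq_iff_iff, iff_false]
          intro hb
          have := congrFun hb v
          rw [Function.update_apply, if_neg (Ne.symm hx)] at this
          exact hvv this
        simp [hzero, hind, h]
      · simp
    · rw [if_neg hc]
      have hne : (Finset.univ.filter fun v => σ v ≠ σ' v).Nonempty := by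
        obtain ⟨y, hy⟩ := Function.ne_iff.mp h
        exact ⟨y, Finset.mem_filter.mpr ⟨Finset.mem_univ _, hy⟩⟩
      have hno : ∀ x b, (Function.update σ x b = σ') = False := by
        intro x b
        simp only [eq_iff_iff, iff_false]
        intro hb
        apply hc
        have hsub : (Finset.univ.filter fun v => σ v ≠ σ' v) ⊆ {x} := by
          intro y hy
          rcases Finset.mem_filter.mp hy with ⟨-, hyy⟩
          rw [Finset.mem_singleton]
          by_contra hyx
          apply hyy
          rw [← hb, Function.update_apply, if_neg hyx]
        have h1 := Finset.card_le_card hsub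
        rw [Finset.card_singleton] at h1
        have h2 := Finset.card_pos.mpr hne
        omega
      simp [hno, hind, h]

end Model

section Model2
set_option linter.unusedSectionVars false
variable {V : Type*} [Fintype V] [DecidableEq V] (G : SimpleGraph V) [DecidableRel G.Adj]
  (δ β : ℝ)

noncomputable def Qtwo : Matrix ((V → Bool) × (V → Bool)) ((V → Bool) × (V → Bool)) ℝ :=
  ∑ i : V × (Bool ⊕ V),
    genM (fun p => (nvMove i p.1, nvMove i p.2)) (nvRate G δ β i)

def marg1 : Matrix ((V → Bool) × (V → Bool)) (V → Bool) ℝ :=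
  fun p σ' => if p.1 = σ' then 1 else 0

def marg2 : Matrix ((V → Bool) × (V → Bool)) (V → Bool) ℝ :=
  fun p σ' => if p.2 = σ' then 1 else 0

def Hmat : Matrix ((V → Bool) × (V → Bool)) V ℝ :=
  fun p x => if p.1 x = p.2 x then 0 else 1

noncomputable def Amat : Matrix V V ℝ := fun y x =>
  (if G.Adj x y then 1 / ((δ + β + 1) * (G.degree x : ℝ)) else 0) - (if x = y then 1 else 0)

theorem Qtwo_mul_apply {κ : Type*} (F : Matrix ((V → Bool) × (V → Bool)) κ ℝ)
    (p : (V → Bool) × (V → Bool)) (k : κ) :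
    (Qtwo G δ β * F) p k = ∑ i : V × (Bool ⊕ V),
      nvRate G δ β i * (F (nvMove i p.1, nvMove i p.2) k - F p k) := by
  rw [Matrix.mul_apply]
  simp only [Qtwo, Matrix.sum_apply, Finset.sum_mul]
  rw [Finset.sum_comm]
  refine Finset.sum_congr rfl fun i _ => ?_
  exact genM_mul_apply (fun p => (nvMove i p.1, nvMove i p.2)) (nvRate G δ β i) p
    (fun p' => F p' k)

theorem Qone_apply' (σ σ' : V → Bool) :
    Qone G δ β σ σ' = ∑ i : V × (Bool ⊕ V),
      nvRate G δ β i * ((if nvMove i σ = σ' then (1:ℝ) else 0) - if σ = σ' then 1 else 0) := by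
  simp only [Qone, Matrix.sum_apply, genM]

theorem marg1_intertwine : Qtwo G δ β * marg1 (V := V) = marg1 (V := V) * Qone G δ β := by
  ext p σ'
  rw [Qtwo_mul_apply, Matrix.mul_apply]
  simp only [marg1, ite_mul, one_mul, zero_mul, Fintype.sum_ite_eq]
  rw [Qone_apply']

theorem marg2_intertwine : Qtwo G δ β * marg2 (V := V) = marg2 (V := V) * Qone G δ β := by
  ext p σ'
  rw [Qtwo_mul_apply, Matrix.mul_apply]
  simp only [marg2, ite_mul, one_mul, zero_mul, Fintype.sum_ite_eq]
  rw [Qone_apply']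

theorem sum_rate_copy (hdeg : ∀ v, 1 ≤ G.degree v) (hδ : 0 < δ) (hβ : 0 < β) (x : V) :
    ∑ y : V, (if G.Adj x y then 1 / ((δ + β + 1) * (G.degree x : ℝ)) else 0)
      = 1 / (δ + β + 1) := by
  have hde : (0:ℝ) < (G.degree x : ℝ) := by exact_mod_cast hdeg x
  have hnb : Finset.univ.filter (fun y => G.Adj x y) = G.neighborFinset x := by
    ext y; simp
  rw [← Finset.sum_filter]
  rw [Finset.sum_const, hnb, SimpleGraph.card_neighborFinset_eq_degree]
  rw [nsmul_eq_mul]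
  have hsb : (0:ℝ) < δ + β + 1 := by linarith
  field_simp

theorem Amat_vecMul (hdeg : ∀ v, 1 ≤ G.degree v) (hδ : 0 < δ) (hβ : 0 < β) :
    Matrix.vecMul (fun _ => (1:ℝ)) (Amat G δ β) = (1 / (δ + β + 1) - 1) • (fun _ => (1:ℝ)) := by
  funext x
  simp only [Matrix.vecMul, dotProduct, Amat, one_mul, Pi.smul_apply, smul_eq_mul,
    mul_one]
  rw [Finset.sum_sub_distrib, sum_rate_copy G δ β hdeg hδ hβ x, Fintype.sum_ite_eq]

theorem Hmat_intertwine (hdeg : ∀ v, 1 ≤ G.degree v) (hδ : 0 < δ) (hβ : 0 < β) :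
    Qtwo G δ β * Hmat (V := V) = Hmat (V := V) * Amat G δ β := by
  have hsb : (0:ℝ) < δ + β + 1 := by linarith
  ext p x
  rw [Qtwo_mul_apply, Matrix.mul_apply]
  have hset : ∀ (v : V) (b : Bool),
      Hmat (Function.update p.1 v b, Function.update p.2 v b) x
        = if v = x then 0 else Hmat p x := by
    intro v b
    rcases eq_or_ne v x with rfl | hvx
    · simp [Hmat]
    · simp [Hmat, Function.update_apply, Ne.symm hvx, hvx]
  have hcopy : ∀ (v y : V),
      Hmat (Function.update p.1 v (p.1 y), Function.update p.2 v (p.2 y)) x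
        = if v = x then Hmat p y else Hmat p x := by
    intro v y
    rcases eq_or_ne v x with rfl | hvx
    · simp [Hmat]
    · simp [Hmat, Function.update_apply, Ne.symm hvx, hvx]
  rw [Fintype.sum_prod_type]
  have hterm : ∀ v : V, (∑ e : Bool ⊕ V, nvRate G δ β (v, e) *
      (Hmat (nvMove (v, e) p.1, nvMove (v, e) p.2) x - Hmat p x))
      = if v = x then
          (δ / (δ + β + 1)) * (0 - Hmat p x) + (β / (δ + β + 1)) * (0 - Hmat p x)
            + ∑ y : V, (if G.Adj x y then 1 / ((δ + β + 1) * (G.degree x : ℝ)) else 0) *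
                (Hmat p y - Hmat p x)
        else 0 := by
    intro v
    rw [Fintype.sum_sum_type, Fintype.sum_bool]
    simp only [nvMove, nvRate, hset, hcopy]
    rcases eq_or_ne v x with rfl | hvx
    · simp
    · simp [hvx]
  rw [Finset.sum_congr rfl fun v _ => hterm v]
  rw [Fintype.sum_ite_eq']
  have hsplit : ∑ y : V, (if G.Adj x y then 1 / ((δ + β + 1) * (G.degree x : ℝ)) else 0) *
      (Hmat p y - Hmat p x)
      = (∑ y : V, (if G.Adj x y then 1 / ((δ + β + 1) * (G.degree x : ℝ)) else 0) * Hmat p y)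
        - (1 / (δ + β + 1)) * Hmat p x := by
    simp only [mul_sub]
    rw [Finset.sum_sub_distrib, ← Finset.sum_mul, sum_rate_copy G δ β hdeg hδ hβ x]
  have hR : ∑ y : V, Hmat p y * Amat G δ β y x
      = (∑ y : V, (if G.Adj x y then 1 / ((δ + β + 1) * (G.degree x : ℝ)) else 0) * Hmat p y)
        - Hmat p x := by
    simp only [Amat, mul_sub]
    rw [Finset.sum_sub_distrib]
    congr 1
    · exact Finset.sum_congr rfl fun y _ => mul_comm _ _
    · simp only [mul_ite, mul_one, mul_zero]
      exact Fintype.sum_ite_eq x (fun y => Hmat p y)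
  rw [hsplit, hR]
  field_simp
  ring

theorem nvRate_nonneg (hδ : 0 < δ) (hβ : 0 < β) (i : V × (Bool ⊕ V)) :
    0 ≤ nvRate G δ β i := by
  have hsb : (0:ℝ) < δ + β + 1 := by linarith
  obtain ⟨x, e⟩ := i
  match e with
  | .inl true => simp only [nvRate]; positivity
  | .inl false => simp only [nvRate]; positivity
  | .inr y =>
    simp only [nvRate]
    split
    · positivity
    · exact le_refl 0

theorem Qtwo_offdiag (hδ : 0 < δ) (hβ : 0 < β) (p p' : (V → Bool) × (V → Bool)) (hp : p ≠ p') :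
    0 ≤ Qtwo G δ β p p' := by
  simp only [Qtwo, Matrix.sum_apply, genM]
  refine Finset.sum_nonneg fun i _ => ?_
  rw [if_neg hp, sub_zero]
  refine mul_nonneg (nvRate_nonneg G δ β hδ hβ i) ?_
  split <;> norm_num

theorem Amat_offdiag (hδ : 0 < δ) (hβ : 0 < β) (y x : V) (hp : y ≠ x) :
    0 ≤ Amat G δ β y x := by
  have hsb : (0:ℝ) < δ + β + 1 := by linarith
  simp only [Amat, if_neg (Ne.symm hp), sub_zero]
  split
  · positivity
  · exact le_refl 0

end Model2


open NormedSpace in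
/-- Optimal temporal mixing for the two-parameter noisy voter model: on any finite graph with
`n` vertices, for any two initial configurations `η, ξ` and every `t ≥ 0`,
`‖P_t(η,·) − P_t(ξ,·)‖ ≤ n·exp(−((δ+β)/(δ+β+1))·t)`. -/
theorem two_parameter_noisy_voter_optimal_temporal_mixing
    {V : Type*} [Fintype V] [DecidableEq V] (δ β : ℝ) (hδ : 0 < δ) (hβ : 0 < β)
    (G : SimpleGraph V) [DecidableRel G.Adj] (hdeg : ∀ v, 1 ≤ G.degree v)
    (η ξ : V → Bool) (t : ℝ) (ht : 0 ≤ t) :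
    tvDist (fun σ => NormedSpace.exp (t • nv2Q G δ β) η σ)
        (fun σ => NormedSpace.exp (t • nv2Q G δ β) ξ σ) ≤
      (Fintype.card V : ℝ) * Real.exp (-((δ + β) / (δ + β + 1)) * t) := by
  classical
  have hsb : (0:ℝ) < δ + β + 1 := by linarith
  set c : ℝ := 1 / (δ + β + 1) - 1 with hc
  have hQ : nv2Q G δ β = Qone G δ β := (Qone_eq G δ β hδ hβ hdeg).symm
  have h1 : (t • Qtwo G δ β) * marg1 (V := V) = marg1 (V := V) * (t • Qone G δ β) := by
    rw [Matrix.smul_mul, marg1_intertwine, ← Matrix.mul_smul]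
  have h2 : (t • Qtwo G δ β) * marg2 (V := V) = marg2 (V := V) * (t • Qone G δ β) := by
    rw [Matrix.smul_mul, marg2_intertwine, ← Matrix.mul_smul]
  have h3 : (t • Qtwo G δ β) * Hmat (V := V) = Hmat (V := V) * (t • Amat G δ β) := by
    rw [Matrix.smul_mul, Hmat_intertwine G δ β hdeg hδ hβ, ← Matrix.mul_smul]
  have E1 := expIntertwine _ _ _ h1
  have E2 := expIntertwine _ _ _ h2
  have E3 := expIntertwine _ _ _ h3
  set Pb := exp (t • Qtwo G δ β) with hPbdef
  set EA := exp (t • Amat G δ β) with hEAdef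
  have hPb : ∀ p p', 0 ≤ Pb p p' := by
    intro p p'
    refine expNonneg (fun a b hab => ?_) p p'
    simp only [Matrix.smul_apply, smul_eq_mul]
    exact mul_nonneg ht (Qtwo_offdiag G δ β hδ hβ a b hab)
  have hEA : ∀ a b, 0 ≤ EA a b := by
    intro a b
    refine expNonneg (fun a b hab => ?_) a b
    simp only [Matrix.smul_apply, smul_eq_mul]
    exact mul_nonneg ht (Amat_offdiag G δ β hδ hβ a b hab)
  have hvec : Matrix.vecMul (fun _ => (1:ℝ)) (t • Amat G δ β) = (t * c) • (fun _ => (1:ℝ)) := by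
    have h := Amat_vecMul G δ β hdeg hδ hβ
    funext x
    have hx := congrFun h x
    simp only [Matrix.vecMul, dotProduct, one_mul, Pi.smul_apply, smul_eq_mul,
      mul_one] at hx ⊢
    simp only [Matrix.smul_apply, smul_eq_mul]
    rw [← Finset.mul_sum, hx]
  have hvecE := expVecMulOnes (t • Amat G δ β) (t * c) hvec
  rw [← hEAdef] at hvecE
  -- the marginal identities
  have hm1 : ∀ s, exp (t • nv2Q G δ β) η s = ∑ q : (V → Bool) × (V → Bool),
      Pb (η, ξ) q * marg1 q s := by
    intro s
    have h := congrFun (congrFun E1 (η, ξ)) s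
    rw [Matrix.mul_apply, Matrix.mul_apply] at h
    rw [hQ, h]
    simp only [marg1, ite_mul, one_mul, zero_mul, Fintype.sum_ite_eq]
  have hm2 : ∀ s, exp (t • nv2Q G δ β) ξ s = ∑ q : (V → Bool) × (V → Bool),
      Pb (η, ξ) q * marg2 q s := by
    intro s
    have h := congrFun (congrFun E2 (η, ξ)) s
    rw [Matrix.mul_apply, Matrix.mul_apply] at h
    rw [hQ, h]
    simp only [marg2, ite_mul, one_mul, zero_mul, Fintype.sum_ite_eq]
  have hHnn : ∀ (q : (V → Bool) × (V → Bool)) (x : V), 0 ≤ Hmat q x := by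
    intro q x
    unfold Hmat
    split <;> norm_num
  have hH1 : ∀ (q : (V → Bool) × (V → Bool)) (x : V), Hmat q x ≤ 1 := by
    intro q x
    unfold Hmat
    split <;> norm_num
  unfold tvDist
  refine Finset.sup'_le _ _ fun B hB => ?_
  simp only
  have hmu : ∑ s ∈ B, exp (t • nv2Q G δ β) η s
      = ∑ q : (V → Bool) × (V → Bool), Pb (η, ξ) q * (if q.1 ∈ B then (1:ℝ) else 0) := by
    rw [Finset.sum_congr rfl fun s _ => hm1 s, Finset.sum_comm]
    refine Finset.sum_congr rfl fun q _ => ?_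
    rw [← Finset.mul_sum]
    congr 1
    simp only [marg1]
    rw [Finset.sum_ite_eq B q.1 (fun _ => (1:ℝ))]
  have hnu : ∑ s ∈ B, exp (t • nv2Q G δ β) ξ s
      = ∑ q : (V → Bool) × (V → Bool), Pb (η, ξ) q * (if q.2 ∈ B then (1:ℝ) else 0) := by
    rw [Finset.sum_congr rfl fun s _ => hm2 s, Finset.sum_comm]
    refine Finset.sum_congr rfl fun q _ => ?_
    rw [← Finset.mul_sum]
    congr 1
    simp only [marg2]
    rw [Finset.sum_ite_eq B q.2 (fun _ => (1:ℝ))]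
  rw [hmu, hnu, ← Finset.sum_sub_distrib]
  simp only [← mul_sub]
  have hHb : ∀ q : (V → Bool) × (V → Bool),
      |(if q.1 ∈ B then (1:ℝ) else 0) - (if q.2 ∈ B then 1 else 0)| ≤ ∑ x, Hmat q x := by
    intro q
    have hnn : (0:ℝ) ≤ ∑ x, Hmat q x := Finset.sum_nonneg fun x _ => hHnn q x
    rcases eq_or_ne q.1 q.2 with he | hne
    · rw [he, sub_self, abs_zero]
      exact hnn
    · have hone : |(if q.1 ∈ B then (1:ℝ) else 0) - (if q.2 ∈ B then 1 else 0)| ≤ 1 := by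
        split_ifs <;> norm_num
      refine hone.trans ?_
      obtain ⟨x, hx⟩ := Function.ne_iff.mp hne
      have hx1 : Hmat q x = 1 := by simp [Hmat, hx]
      calc (1:ℝ) = Hmat q x := hx1.symm
        _ ≤ ∑ x, Hmat q x := Finset.single_le_sum (fun y _ => hHnn q y) (Finset.mem_univ x)
  calc |∑ q : (V → Bool) × (V → Bool),
        Pb (η, ξ) q * ((if q.1 ∈ B then (1:ℝ) else 0) - (if q.2 ∈ B then 1 else 0))|
      ≤ ∑ q : (V → Bool) × (V → Bool),
        |Pb (η, ξ) q * ((if q.1 ∈ B then (1:ℝ) else 0) - (if q.2 ∈ B then 1 else 0))| :=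
      Finset.abs_sum_le_sum_abs _ _
    _ = ∑ q : (V → Bool) × (V → Bool),
        Pb (η, ξ) q * |(if q.1 ∈ B then (1:ℝ) else 0) - (if q.2 ∈ B then 1 else 0)| := by
      refine Finset.sum_congr rfl fun q _ => ?_
      rw [abs_mul, abs_of_nonneg (hPb _ _)]
    _ ≤ ∑ q : (V → Bool) × (V → Bool), Pb (η, ξ) q * (∑ x, Hmat q x) :=
      Finset.sum_le_sum fun q _ => mul_le_mul_of_nonneg_left (hHb q) (hPb _ _)
    _ = ∑ x : V, ∑ q : (V → Bool) × (V → Bool), Pb (η, ξ) q * Hmat q x := by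
      rw [Finset.sum_comm]
      exact Finset.sum_congr rfl fun q _ => Finset.mul_sum _ _ _
    _ = ∑ x : V, (Pb * Hmat (V := V)) (η, ξ) x := by
      refine Finset.sum_congr rfl fun x _ => ?_
      rw [Matrix.mul_apply]
    _ = ∑ x : V, (Hmat (V := V) * EA) (η, ξ) x := by rw [E3]
    _ ≤ ∑ x : V, ∑ y : V, EA y x := by
      refine Finset.sum_le_sum fun x _ => ?_
      rw [Matrix.mul_apply]
      refine Finset.sum_le_sum fun y _ => ?_
      calc Hmat (η, ξ) y * EA y x ≤ 1 * EA y x :=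
          mul_le_mul_of_nonneg_right (hH1 _ _) (hEA _ _)
        _ = EA y x := one_mul _
    _ = ∑ x : V, Real.exp (t * c) := by
      refine Finset.sum_congr rfl fun x _ => ?_
      have hx := congrFun hvecE x
      simp only [Matrix.vecMul, dotProduct, one_mul, Pi.smul_apply, smul_eq_mul,
        mul_one] at hx
      exact hx
    _ = (Fintype.card V : ℝ) * Real.exp (t * c) := by
      rw [Finset.sum_const, Finset.card_univ, nsmul_eq_mul]
    _ = (Fintype.card V : ℝ) * Real.exp (-((δ + β) / (δ + β + 1)) * t) := by
      congr 2
      rw [hc]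
      field_simp
      ring
end
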